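/- arXiv:2205.14416 — 7 statements merged into one kernel-verified Lean document; each statement's English description precedes it below -/
import Mathlib

section
/- Let q > 0 and let z, w be complex numbers with Re z ≥ 0, Re w ≥ 0 and q ≥ |z - w|. Then Re(1/(q + z)) ≤ 8 * Re(1/(q + w)). -/
/-- If `q > 0`, `Re z ≥ 0`, `Re w ≥ 0` and `q ≥ |z - w|`, then
`Re(1/(q + z)) ≤ 8 · Re(1/(q + w))`. -/
theorem stmt_2 (q : ℝ) (hq : 0 < q) (z w : ℂ) (hz : 0 ≤ z.re) (hw : 0 ≤ w.re)
    (hqzw : ‖z - w‖ ≤ q) :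
    (((q : ℂ) + z)⁻¹).re ≤ 8 * (((q : ℂ) + w)⁻¹).re := by
  have hre : |z.re - w.re| ≤ q := by
    calc |z.re - w.re| = |(z - w).re| := by simp
    _ ≤ ‖z - w‖ := Complex.abs_re_le_norm _
    _ ≤ q := hqzw
  have him : |z.im - w.im| ≤ q := by
    calc |z.im - w.im| = |(z - w).im| := by simp
    _ ≤ ‖z - w‖ := Complex.abs_im_le_norm _
    _ ≤ q := hqzw
  obtain ⟨hre1, hre2⟩ := abs_le.mp hre
  obtain ⟨him1, him2⟩ := abs_le.mp him
  have h1 : 0 < Complex.normSq ((q:ℂ)+z) := by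
    have : ((q:ℂ)+z).re > 0 := by simp; linarith
    exact Complex.normSq_pos.mpr (fun h => by simp [h] at this)
  have h2 : 0 < Complex.normSq ((q:ℂ)+w) := by
    have : ((q:ℂ)+w).re > 0 := by simp; linarith
    exact Complex.normSq_pos.mpr (fun h => by simp [h] at this)
  rw [Complex.inv_re, Complex.inv_re, ← mul_div_assoc, div_le_div_iff₀ h1 h2]
  simp only [Complex.normSq_apply, Complex.add_re, Complex.add_im, Complex.ofReal_re,
    Complex.ofReal_im, zero_add]
  set a := z.re; set b := z.im; set c := w.re; set d := w.im
  have hA : 0 < q + a := by linarith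
  have hC : 0 < q + c := by linarith
  have hAC : 0 ≤ 2*(q+c) - (q+a) := by linarith
  have hCA : 0 ≤ 2*(q+a) - (q+c) := by linarith
  have hbd : (b - d)^2 ≤ q^2 := by nlinarith [abs_nonneg (b - d), sq_abs (b - d)]
  have hd : d^2 ≤ 2*b^2 + 2*q^2 := by nlinarith [sq_nonneg (b + (b - d))]
  have hq2 : q^2 ≤ (q+a)^2 := by nlinarith
  nlinarith [mul_nonneg (mul_nonneg hA.le hC.le) hCA, mul_nonneg hAC (sq_nonneg d),
    mul_nonneg hC.le (by linarith : (0:ℝ) ≤ 2*b^2 + 2*q^2 - d^2),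
    mul_nonneg hC.le (by linarith : (0:ℝ) ≤ (q+a)^2 - q^2),
    mul_nonneg hC.le (sq_nonneg (q+a)), mul_nonneg hC.le (sq_nonneg b)]
end

section
/- Let φ : [0,∞) × [0,1] → [0,∞) be bounded measurable, let (λ_n) be a uniform stick-breaking process on [0,T] and (V_n) an independent i.i.d. Uniform(0,1) sequence. Then E[Σ_{n=1}^∞ φ(λ_n, V_n)] = ∫_0^T φ̄(t)/t dt, where φ̄(t) = ∫_0^1 φ(t,u) du. -/
open MeasureTheory ProbabilityTheory Real Set ENNReal

lemma map_affine (a b : ℝ) (ha : a ≠ 0) :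
    Measure.map (fun u => a * u + b) (volume : Measure ℝ)
      = ENNReal.ofReal |a⁻¹| • volume := by
  have h : (fun u : ℝ => a * u + b) = (fun x : ℝ => x + b) ∘ (fun u : ℝ => a * u) := rfl
  rw [h, ← Measure.map_map (measurable_add_const b) (measurable_const_mul a),
    Real.map_volume_mul_left ha, Measure.map_smul]
  congr 1
  exact map_add_right_eq_self volume b

lemma map_affine_restrict (a b : ℝ) (ha : a ≠ 0) (s : Set ℝ) :
    Measure.map (fun u => a * u + b) (volume.restrict ((fun u : ℝ => a * u + b) ⁻¹' s))
      = ENNReal.ofReal |a⁻¹| • volume.restrict s := by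
  have he : MeasurableEmbedding (fun u : ℝ => a * u + b) := by
    have h1 : MeasurableEmbedding (fun x : ℝ => x + b) :=
      (Homeomorph.addRight b).measurableEmbedding
    have h2 : MeasurableEmbedding (fun u : ℝ => a * u) :=
      (Homeomorph.mulLeft₀ a ha).measurableEmbedding
    exact h1.comp h2
  rw [← he.restrict_map, map_affine a b ha, Measure.restrict_smul]

lemma cov_mul {q : ℝ → ℝ≥0∞} (hq : Measurable q) {ℓ : ℝ} (hℓ : 0 < ℓ) :
    ∫⁻ u in Set.Ioo (0:ℝ) 1, q (ℓ * u)
      = ENNReal.ofReal ℓ⁻¹ * ∫⁻ t in Set.Ioo (0:ℝ) ℓ, q t := by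
  have hpre : (fun u : ℝ => ℓ * u + 0) ⁻¹' Set.Ioo 0 ℓ = Set.Ioo 0 1 := by
    ext u
    simp only [Set.mem_preimage, Set.mem_Ioo, add_zero]
    constructor
    · rintro ⟨h1, h2⟩
      constructor <;> nlinarith
    · rintro ⟨h1, h2⟩
      constructor <;> nlinarith
  have hmap := map_affine_restrict ℓ 0 (ne_of_gt hℓ) (Set.Ioo 0 ℓ)
  rw [hpre] at hmap
  have : ∫⁻ u in Set.Ioo (0:ℝ) 1, q (ℓ * u)
      = ∫⁻ u in Set.Ioo (0:ℝ) 1, q (ℓ * u + 0) := by simp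
  rw [this, ← lintegral_map hq (by fun_prop), hmap, lintegral_smul_measure,
    abs_of_pos (by positivity), smul_eq_mul]

lemma cov_mul' {q : ℝ → ℝ≥0∞} (hq : Measurable q) {ℓ : ℝ} (hℓ : 0 < ℓ) :
    ∫⁻ u in Set.Ioo (0:ℝ) 1, q (ℓ * (1 - u))
      = ENNReal.ofReal ℓ⁻¹ * ∫⁻ t in Set.Ioo (0:ℝ) ℓ, q t := by
  have hpre : (fun u : ℝ => (-ℓ) * u + ℓ) ⁻¹' Set.Ioo 0 ℓ = Set.Ioo 0 1 := by
    ext u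
    simp only [Set.mem_preimage, Set.mem_Ioo, neg_mul]
    constructor
    · rintro ⟨h1, h2⟩
      constructor <;> nlinarith
    · rintro ⟨h1, h2⟩
      constructor <;> nlinarith
  have hmap := map_affine_restrict (-ℓ) ℓ (by simp [ne_of_gt hℓ]) (Set.Ioo 0 ℓ)
  rw [hpre] at hmap
  have h2 : ∫⁻ u in Set.Ioo (0:ℝ) 1, q (ℓ * (1 - u))
      = ∫⁻ u in Set.Ioo (0:ℝ) 1, q ((-ℓ) * u + ℓ) := by
    apply lintegral_congr
    intro u
    ring_nf
  rw [h2, ← lintegral_map hq (by fun_prop), hmap, lintegral_smul_measure]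
  congr 2
  rw [abs_of_neg (by simp [hℓ] : (-ℓ)⁻¹ < 0)]
  ring

noncomputable def sbF (k : ℝ → ℝ≥0∞) (x : ℝ) : ℝ≥0∞ :=
  ∫⁻ t in Set.Ioc (0:ℝ) x, k t / ENNReal.ofReal t

lemma sbF_mono (k : ℝ → ℝ≥0∞) : Monotone (sbF k) := fun _ _ hxy =>
  lintegral_mono_set (Set.Ioc_subset_Ioc_right hxy)

lemma sbF_meas (k : ℝ → ℝ≥0∞) : Measurable (sbF k) := (sbF_mono k).measurable

lemma fubini_claim {k : ℝ → ℝ≥0∞} (hk : Measurable k) {ℓ : ℝ} (hℓ : 0 < ℓ) :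
    (∫⁻ t in Set.Ioo (0:ℝ) ℓ, k t) + (∫⁻ x in Set.Ioo (0:ℝ) ℓ, sbF k x)
      = ENNReal.ofReal ℓ * sbF k ℓ := by
  set hdvf : ℝ → ℝ≥0∞ := fun t => k t / ENNReal.ofReal t with hh_def
  have hh : Measurable hdvf := hk.div (ENNReal.measurable_ofReal.comp measurable_id)
  -- rewrite B via Fubini
  have hB : (∫⁻ x in Set.Ioo (0:ℝ) ℓ, sbF k x)
      = ∫⁻ t, ((Set.Ioi (0:ℝ)).indicator  hdvf t) * volume (Set.Ici t ∩ Set.Ioo 0 ℓ) := by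
    have h1 : ∀ x : ℝ, sbF k x = ∫⁻ t, (Set.Ioc (0:ℝ) x).indicator  hdvf t := by
      intro x
      rw [sbF, lintegral_indicator measurableSet_Ioc]
    calc (∫⁻ x in Set.Ioo (0:ℝ) ℓ, sbF k x)
        = ∫⁻ x in Set.Ioo (0:ℝ) ℓ, ∫⁻ t, (Set.Ioc (0:ℝ) x).indicator  hdvf t := by
          exact lintegral_congr fun x => h1 x
      _ = ∫⁻ t, ∫⁻ x in Set.Ioo (0:ℝ) ℓ, (Set.Ioc (0:ℝ) x).indicator  hdvf t := by
          apply lintegral_lintegral_swap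
          have heq : (fun p : ℝ × ℝ => (Set.Ioc (0:ℝ) p.1).indicator  hdvf p.2)
              = Set.indicator {p : ℝ × ℝ | 0 < p.2 ∧ p.2 ≤ p.1} (fun p =>  hdvf p.2) := by
            funext p
            by_cases hp : 0 < p.2 ∧ p.2 ≤ p.1 <;>
              simp [Set.indicator_apply, Set.mem_Ioc, hp]
          have hmeas : Measurable (fun p : ℝ × ℝ => (Set.Ioc (0:ℝ) p.1).indicator  hdvf p.2) := by
            rw [heq]
            exact (hh.comp measurable_snd).indicator
              ((measurableSet_lt measurable_const measurable_snd).inter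
                (measurableSet_le measurable_snd measurable_fst))
          exact hmeas.aemeasurable
      _ = ∫⁻ t, ((Set.Ioi (0:ℝ)).indicator  hdvf t) * volume (Set.Ici t ∩ Set.Ioo 0 ℓ) := by
          apply lintegral_congr
          intro t
          have h2 : (fun x : ℝ => (Set.Ioc (0:ℝ) x).indicator  hdvf t)
              = (Set.Ici t).indicator (fun _ => (Set.Ioi (0:ℝ)).indicator  hdvf t) := by
            funext x
            by_cases h3 : t ≤ x <;> by_cases h4 : 0 < t <;>
              simp [Set.indicator_apply, Set.mem_Ioc, Set.mem_Ici, Set.mem_Ioi, h3, h4]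
          rw [h2, lintegral_indicator measurableSet_Ici, setLIntegral_const,
            Measure.restrict_apply measurableSet_Ici]
  have hA : (∫⁻ t in Set.Ioo (0:ℝ) ℓ, k t) = ∫⁻ t, (Set.Ioo (0:ℝ) ℓ).indicator k t :=
    (lintegral_indicator measurableSet_Ioo k).symm
  have hR : ENNReal.ofReal ℓ * sbF k ℓ
      = ∫⁻ t, ENNReal.ofReal ℓ * (Set.Ioc (0:ℝ) ℓ).indicator  hdvf t := by
    rw [sbF, ← lintegral_indicator measurableSet_Ioc, lintegral_const_mul _ (hh.indicator measurableSet_Ioc)]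
  rw [hA, hB, hR, ← lintegral_add_left (hk.indicator measurableSet_Ioo)]
  apply lintegral_congr_ae
  have hae : ∀ᵐ t : ℝ, t ≠ ℓ := by
    rw [ae_iff]
    have : {t : ℝ | ¬ t ≠ ℓ} = {ℓ} := by ext t; simp
    rw [this]
    exact Real.volume_singleton
  filter_upwards [hae] with t htℓ
  rcases le_or_gt t 0 with ht0 | ht0
  · have e1 : t ∉ Set.Ioo (0:ℝ) ℓ := by simp [Set.mem_Ioo]; intro h'; linarith
    have e2 : t ∉ Set.Ioi (0:ℝ) := by simpa using ht0
    have e3 : t ∉ Set.Ioc (0:ℝ) ℓ := by simp [Set.mem_Ioc]; intro h'; linarith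
    simp [Set.indicator_of_notMem, e1, e2, e3]
  rcases lt_trichotomy t ℓ with h | h | h
  · -- 0 < t < ℓ
    have e1 : t ∈ Set.Ioo (0:ℝ) ℓ := ⟨ht0, h⟩
    have e2 : t ∈ Set.Ioi (0:ℝ) := ht0
    have e3 : t ∈ Set.Ioc (0:ℝ) ℓ := ⟨ht0, le_of_lt h⟩
    have e4 : Set.Ici t ∩ Set.Ioo (0:ℝ) ℓ = Set.Ico t ℓ := by
      ext x
      simp only [Set.mem_inter_iff, Set.mem_Ici, Set.mem_Ioo, Set.mem_Ico]
      constructor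
      · rintro ⟨a, _, c⟩; exact ⟨a, c⟩
      · rintro ⟨a, b⟩; exact ⟨a, lt_of_lt_of_le ht0 a, b⟩
    rw [Set.indicator_of_mem e1, Set.indicator_of_mem e2, Set.indicator_of_mem e3, e4,
      Real.volume_Ico]
    -- k t +  hdvf t * ofReal (ℓ - t) = ofReal ℓ *  hdvf t
    have hinv : (ENNReal.ofReal t)⁻¹ = ENNReal.ofReal t⁻¹ :=
      (ENNReal.ofReal_inv_of_pos ht0).symm
    have hht :  hdvf t = k t * ENNReal.ofReal t⁻¹ := by
      rw [hh_def]; simp only [div_eq_mul_inv, hinv]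
    rw [hht]
    have step : ENNReal.ofReal t⁻¹ * ENNReal.ofReal (ℓ - t)
        = ENNReal.ofReal (t⁻¹ * (ℓ - t)) := by
      rw [ENNReal.ofReal_mul (le_of_lt (inv_pos.2 ht0))]
    calc k t + k t * ENNReal.ofReal t⁻¹ * ENNReal.ofReal (ℓ - t)
        = k t * (1 + ENNReal.ofReal (t⁻¹ * (ℓ - t))) := by
          rw [mul_add, mul_one, mul_assoc, step]
      _ = k t * ENNReal.ofReal (1 + t⁻¹ * (ℓ - t)) := by
          rw [← ENNReal.ofReal_one, ← ENNReal.ofReal_add zero_le_one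
            (mul_nonneg (le_of_lt (inv_pos.2 ht0)) (by linarith))]
      _ = k t * ENNReal.ofReal (ℓ * t⁻¹) := by
          congr 1
          field_simp
          ring_nf
      _ = ENNReal.ofReal ℓ * (k t * ENNReal.ofReal t⁻¹) := by
          rw [ENNReal.ofReal_mul (le_of_lt (lt_trans ht0 h))]
          ring
  · exact absurd h htℓ
  · -- t > ℓ
    have e1 : t ∉ Set.Ioo (0:ℝ) ℓ := by simp [Set.mem_Ioo]; intro _; linarith
    have e3 : t ∉ Set.Ioc (0:ℝ) ℓ := by simp [Set.mem_Ioc]; intro _; linarith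
    have e4 : Set.Ici t ∩ Set.Ioo (0:ℝ) ℓ = ∅ := by
      ext x
      simp only [Set.mem_inter_iff, Set.mem_Ici, Set.mem_Ioo, Set.mem_empty_iff_false,
        iff_false, not_and]
      intro hx h0x
      linarith
    rw [Set.indicator_of_notMem e1, Set.indicator_of_notMem e3, e4]
    simp

lemma key_ode {k : ℝ → ℝ≥0∞} (hk : Measurable k) {ℓ : ℝ} (hℓ : 0 < ℓ) :
    (∫⁻ u in Set.Ioo (0:ℝ) 1, k (ℓ * (1 - u)))
      + (∫⁻ u in Set.Ioo (0:ℝ) 1, sbF k (ℓ * u)) = sbF k ℓ := by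
  rw [cov_mul' hk hℓ, cov_mul (sbF_meas k) hℓ, ← mul_add, fubini_claim hk hℓ,
    ← mul_assoc, ← ENNReal.ofReal_mul (le_of_lt (inv_pos.2 hℓ)),
    inv_mul_cancel₀ (ne_of_gt hℓ), ENNReal.ofReal_one, one_mul]

lemma sbF_le {k : ℝ → ℝ≥0∞} {Cg : ℝ≥0∞} {ε : ℝ} (hε : 0 < ε) (hkC : ∀ t, k t ≤ Cg)
    (hk0 : ∀ t ≤ ε, k t = 0) (x : ℝ) :
    sbF k x ≤ (Cg / ENNReal.ofReal ε) * ENNReal.ofReal x := by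
  have hpt : ∀ t ∈ Set.Ioc (0:ℝ) x, k t / ENNReal.ofReal t ≤ Cg / ENNReal.ofReal ε := by
    intro t _
    rcases le_or_gt t ε with h | h
    · rw [hk0 t h, ENNReal.zero_div]
      exact zero_le
    · exact ENNReal.div_le_div (hkC t) (ENNReal.ofReal_le_ofReal h.le)
  calc sbF k x ≤ ∫⁻ _ in Set.Ioc (0:ℝ) x, Cg / ENNReal.ofReal ε :=
        setLIntegral_mono measurable_const hpt
    _ = (Cg / ENNReal.ofReal ε) * volume (Set.Ioc (0:ℝ) x) := setLIntegral_const _ _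
    _ ≤ (Cg / ENNReal.ofReal ε) * ENNReal.ofReal x := by
        rw [Real.volume_Ioc, sub_zero]

lemma lemA {Ω : Type*} [MeasurableSpace Ω] {μ : Measure Ω} [IsProbabilityMeasure μ]
    {X Y : Ω → ℝ} (hX : Measurable X) (hY : Measurable Y) (hind : IndepFun X Y μ)
    (F2 : ℝ → ℝ → ℝ≥0∞) (hF : Measurable (Function.uncurry F2)) :
    ∫⁻ ω, F2 (X ω) (Y ω) ∂μ = ∫⁻ ω, ∫⁻ v, F2 (X ω) v ∂(μ.map Y) ∂μ := by
  have hmap : μ.map (fun ω => (X ω, Y ω)) = (μ.map X).prod (μ.map Y) :=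
    (indepFun_iff_map_prod_eq_prod_map_map hX.aemeasurable hY.aemeasurable).mp hind
  have hF2 : Measurable (fun p : ℝ × ℝ => F2 p.1 p.2) := hF
  haveI : IsProbabilityMeasure (μ.map Y) := Measure.isProbabilityMeasure_map hY.aemeasurable
  haveI : IsProbabilityMeasure (μ.map X) := Measure.isProbabilityMeasure_map hX.aemeasurable
  calc ∫⁻ ω, F2 (X ω) (Y ω) ∂μ
      = ∫⁻ p, F2 p.1 p.2 ∂(μ.map fun ω => (X ω, Y ω)) :=
        (lintegral_map hF2 (hX.prodMk hY)).symm
    _ = ∫⁻ x, ∫⁻ v, F2 x v ∂(μ.map Y) ∂(μ.map X) := by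
        rw [hmap]; exact lintegral_prod _ hF2.aemeasurable
    _ = ∫⁻ ω, ∫⁻ v, F2 (X ω) v ∂(μ.map Y) ∂μ :=
        lintegral_map (Measurable.lintegral_prod_right hF) hX

lemma J_half : ∫⁻ u in Set.Ioo (0:ℝ) 1, ENNReal.ofReal u = ENNReal.ofReal (1/2) := by
  have hint : IntegrableOn (fun u : ℝ => u) (Set.Ioo (0:ℝ) 1) volume := by
    have := (intervalIntegral.intervalIntegrable_id (μ := volume) (a := (0:ℝ)) (b := 1)).1
    exact this.mono_set Set.Ioo_subset_Ioc_self
  have hnn : 0 ≤ᵐ[volume.restrict (Set.Ioo (0:ℝ) 1)] fun u : ℝ => u := by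
    filter_upwards [ae_restrict_mem measurableSet_Ioo] with u hu
    exact le_of_lt hu.1
  rw [← ofReal_integral_eq_lintegral_ofReal hint hnn]
  congr 1
  rw [← MeasureTheory.integral_Ioc_eq_integral_Ioo,
    ← intervalIntegral.integral_of_le (zero_le_one), integral_id]
  norm_num

lemma tsum_iSup_swap {c : ℕ → ℕ → ℝ≥0∞} (hmono : ∀ n, Monotone (c n)) :
    ∑' n, ⨆ j, c n j = ⨆ j, ∑' n, c n j := by
  calc ∑' n, ⨆ j, c n j = ∫⁻ n, ⨆ j, c n j ∂(Measure.count) := (lintegral_count _).symm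
    _ = ⨆ j, ∫⁻ n, c n j ∂(Measure.count) :=
        lintegral_iSup (fun _ => measurable_from_top)
          (fun i j hij n => hmono n hij)
    _ = ⨆ j, ∑' n, c n j := by simp [lintegral_count]

section Indep

variable {Ω : Type*} [MeasurableSpace Ω] {μ : Measure Ω}
  {U V : ℕ → Ω → ℝ} (T : ℝ) {L : ℕ → Ω → ℝ}

lemma elim_meas (hUmeas : ∀ n, Measurable (U n)) (hVmeas : ∀ n, Measurable (V n)) :
    ∀ i : ℕ ⊕ ℕ, Measurable (Sum.elim U V i) := by
  rintro (i | i)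
  · exact hUmeas i
  · exact hVmeas i

lemma L_eq_prod (hL0 : ∀ ω, L 0 ω = T) (hL : ∀ n ω, L (n + 1) ω = U (n + 1) ω * L n ω) :
    ∀ n ω, L n ω = T * ∏ k ∈ Finset.range n, U (k + 1) ω := by
  intro n
  induction n with
  | zero => intro ω; simp [hL0 ω]
  | succ n ih =>
    intro ω
    rw [hL n ω, ih ω, Finset.prod_range_succ]
    ring

lemma L_meas (hUmeas : ∀ n, Measurable (U n)) (hL0 : ∀ ω, L 0 ω = T)
    (hL : ∀ n ω, L (n + 1) ω = U (n + 1) ω * L n ω) (n : ℕ) : Measurable (L n) := by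
  have : L n = fun ω => T * ∏ k ∈ Finset.range n, U (k + 1) ω :=
    funext fun ω => L_eq_prod T hL0 hL n ω
  rw [this]
  exact measurable_const.mul (Finset.measurable_prod _ fun k _ => hUmeas (k + 1))

lemma indep_L_U (hUmeas : ∀ n, Measurable (U n)) (hVmeas : ∀ n, Measurable (V n))
    (hindep : iIndepFun (Sum.elim U V) μ)
    (hL0 : ∀ ω, L 0 ω = T) (hL : ∀ n ω, L (n + 1) ω = U (n + 1) ω * L n ω) (n : ℕ) :
    IndepFun (L n) (U (n + 1)) μ := by
  classical
  set s : Finset (ℕ ⊕ ℕ) := (Finset.range n).image (fun k => Sum.inl (k + 1)) with hs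
  have hnotmem : (Sum.inl (n + 1) : ℕ ⊕ ℕ) ∉ s := by
    simp only [hs, Finset.mem_image, Finset.mem_range, Sum.inl.injEq]
    rintro ⟨k, hk, hk2⟩
    omega
  have h1 : IndepFun (∏ j ∈ s, Sum.elim U V j) (Sum.elim U V (Sum.inl (n + 1))) μ :=
    hindep.indepFun_finsetProd_of_notMem (elim_meas hUmeas hVmeas) hnotmem
  have h2 := h1.comp (measurable_const_mul T) measurable_id
  have e1 : (fun x => T * x) ∘ (∏ j ∈ s, Sum.elim U V j) = L n := by
    funext ω
    simp only [Function.comp_apply, Finset.prod_apply]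
    rw [L_eq_prod T hL0 hL n ω, hs, Finset.prod_image (fun a _ b _ h => by
      simpa using h)]
    simp
  have e2 : (id ∘ Sum.elim U V (Sum.inl (n + 1))) = U (n + 1) := rfl
  rwa [e1, e2] at h2


lemma indep_lam_V (hUmeas : ∀ n, Measurable (U n)) (hVmeas : ∀ n, Measurable (V n))
    (hindep : iIndepFun (Sum.elim U V) μ)
    (hL0 : ∀ ω, L 0 ω = T) (hL : ∀ n ω, L (n + 1) ω = U (n + 1) ω * L n ω) (n : ℕ) :
    IndepFun (fun ω => L n ω - L (n + 1) ω) (V (n + 1)) μ := by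
  classical
  set S : Finset (ℕ ⊕ ℕ) := (Finset.range (n + 2)).image Sum.inl with hS
  set Tf : Finset (ℕ ⊕ ℕ) := {Sum.inr (n + 1)} with hTf
  have hdisj : Disjoint S Tf := by
    rw [Finset.disjoint_left]
    intro a haS haT
    rw [hS, Finset.mem_image] at haS
    rw [hTf, Finset.mem_singleton] at haT
    obtain ⟨k, _, hk⟩ := haS
    rw [haT] at hk
    exact Sum.inl_ne_inr hk
  have base := hindep.indepFun_finset S Tf hdisj (elim_meas hUmeas hVmeas)
  -- evaluation helper
  set ev : ((i : S) → ℝ) → ℕ → ℝ :=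
    fun x j => if h : (Sum.inl j : ℕ ⊕ ℕ) ∈ S then x ⟨Sum.inl j, h⟩ else 0 with hev
  have hev_meas : ∀ j, Measurable (fun x => ev x j) := by
    intro j
    rw [hev]
    simp only []
    split_ifs with h
    · exact measurable_pi_apply _
    · exact measurable_const
  set gl : ((i : S) → ℝ) → ℝ := fun x =>
    (T * ∏ k ∈ Finset.range n, ev x (k + 1)) - (T * ∏ k ∈ Finset.range (n + 1), ev x (k + 1))
    with hgl
  have hgl_meas : Measurable gl := by
    apply Measurable.sub <;>
      exact measurable_const.mul (Finset.measurable_prod _ fun k _ => hev_meas (k + 1))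
  set gr : ((i : Tf) → ℝ) → ℝ := fun x => x ⟨Sum.inr (n + 1), by simp [hTf]⟩ with hgr
  have hgr_meas : Measurable gr := measurable_pi_apply _
  have h2 := base.comp hgl_meas hgr_meas
  have key : ∀ m : ℕ, m ≤ n + 1 → ∀ ω,
      (T * ∏ k ∈ Finset.range m, ev (fun i : S => Sum.elim U V i ω) (k + 1)) = L m ω := by
    intro m hm ω
    rw [L_eq_prod T hL0 hL m ω]
    congr 1
    apply Finset.prod_congr rfl
    intro k hk
    have hkS : (Sum.inl (k + 1) : ℕ ⊕ ℕ) ∈ S := by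
      rw [hS, Finset.mem_image]
      exact ⟨k + 1, Finset.mem_range.2 (by have := Finset.mem_range.1 hk; omega), rfl⟩
    rw [hev]
    simp only [hkS, dif_pos]
    rfl
  have e1 : gl ∘ (fun ω (i : S) => Sum.elim U V i ω) = fun ω => L n ω - L (n + 1) ω := by
    funext ω
    simp only [Function.comp_apply, hgl]
    rw [key n (by omega) ω, key (n + 1) le_rfl ω]
  have e2 : gr ∘ (fun ω (i : Tf) => Sum.elim U V i ω) = V (n + 1) := by
    funext ω
    simp only [Function.comp_apply, hgr]
    rfl
  rwa [e1, e2] at h2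

end Indep


/-- Let `φ : [0,∞)×[0,1] → [0,∞)` be bounded measurable, `(λ_n)` a uniform
stick-breaking process on `[0,T]` and `(V_n)` an independent i.i.d. `U(0,1)` sequence.
Then `E[Σ_{n≥1} φ(λ_n, V_n)] = ∫_0^T φ̄(t)/t dt` where `φ̄(t) = ∫_0^1 φ(t,u) du`. -/
theorem stmt_7 {Ω : Type*} [MeasurableSpace Ω] (μ : Measure Ω) [IsProbabilityMeasure μ]
    (T : ℝ) (hT : 0 < T)
    (U V : ℕ → Ω → ℝ)
    (hUmeas : ∀ n, Measurable (U n)) (hVmeas : ∀ n, Measurable (V n))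
    (hindep : iIndepFun (Sum.elim U V) μ)
    (hUunif : ∀ n, μ.map (U n) = volume.restrict (Set.Ioo (0 : ℝ) 1))
    (hVunif : ∀ n, μ.map (V n) = volume.restrict (Set.Ioo (0 : ℝ) 1))
    (L : ℕ → Ω → ℝ) (hL0 : ∀ ω, L 0 ω = T)
    (hL : ∀ n ω, L (n + 1) ω = U (n + 1) ω * L n ω)
    (lam : ℕ → Ω → ℝ) (hlam : ∀ n ω, lam (n + 1) ω = L n ω - L (n + 1) ω)
    (φ : ℝ → ℝ → ℝ) (hφmeas : Measurable (Function.uncurry φ))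
    (hφnn : ∀ t u : ℝ, 0 ≤ φ t u) (hφbdd : ∃ C : ℝ, ∀ t u : ℝ, φ t u ≤ C) :
    ∫⁻ ω, ∑' n : ℕ, ENNReal.ofReal (φ (lam (n + 1) ω) (V (n + 1) ω)) ∂μ
      = ∫⁻ t in Set.Ioc (0 : ℝ) T,
          ENNReal.ofReal (∫ u in Set.Ioo (0 : ℝ) 1, φ t u) / ENNReal.ofReal t := by
  classical
  obtain ⟨C, hC⟩ := hφbdd
  have hLmeas : ∀ n, Measurable (L n) := L_meas T hUmeas hL0 hL
  have hlam_eq : ∀ n ω, lam (n + 1) ω = L n ω * (1 - U (n + 1) ω) := by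
    intro n ω; rw [hlam, hL]; ring
  have hlammeas : ∀ n, Measurable (lam (n + 1)) := by
    intro n
    have h : lam (n + 1) = fun ω => L n ω - L (n + 1) ω := funext fun ω => hlam n ω
    rw [h]; exact (hLmeas n).sub (hLmeas (n + 1))
  set g : ℝ → ℝ≥0∞ := fun t => ∫⁻ u in Set.Ioo (0:ℝ) 1, ENNReal.ofReal (φ t u) with hg
  have hgmeas : Measurable g :=
    Measurable.lintegral_prod_right (ENNReal.measurable_ofReal.comp hφmeas)
  have hgbdd : ∀ t, g t ≤ ENNReal.ofReal C := by
    intro t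
    calc g t ≤ ∫⁻ _ in Set.Ioo (0:ℝ) 1, ENNReal.ofReal C :=
          setLIntegral_mono measurable_const fun u _ => ENNReal.ofReal_le_ofReal (hC t u)
      _ = ENNReal.ofReal C := by
          rw [setLIntegral_const, Real.volume_Ioo]; norm_num
  -- a.e. facts
  have hU01 : ∀ᵐ ω ∂μ, ∀ n, U n ω ∈ Set.Ioo (0:ℝ) 1 := by
    rw [ae_all_iff]
    intro n
    rw [ae_iff]
    have h1 : {ω | ¬ U n ω ∈ Set.Ioo (0:ℝ) 1} = U n ⁻¹' (Set.Ioo (0:ℝ) 1)ᶜ := rfl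
    rw [h1, ← Measure.map_apply (hUmeas n) measurableSet_Ioo.compl, hUunif n,
      Measure.restrict_apply measurableSet_Ioo.compl, Set.compl_inter_self]
    exact measure_empty
  have hLbounds : ∀ᵐ ω ∂μ, ∀ n, 0 < L n ω ∧ L n ω ≤ T := by
    filter_upwards [hU01] with ω hω
    intro n
    induction n with
    | zero => rw [hL0]; exact ⟨hT, le_rfl⟩
    | succ n ih =>
      rw [hL]
      obtain ⟨hu0, hu1⟩ := hω (n + 1)
      constructor
      · exact mul_pos hu0 ih.1
      · nlinarith [ih.1, ih.2]
  have hlamIoc : ∀ᵐ ω ∂μ, ∀ n, lam (n + 1) ω ∈ Set.Ioc 0 T := by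
    filter_upwards [hU01, hLbounds] with ω hω hLω
    intro n
    rw [hlam_eq]
    obtain ⟨hu0, hu1⟩ := hω (n + 1)
    obtain ⟨hl0, hl1⟩ := hLω n
    constructor
    · nlinarith
    · nlinarith
  -- the truncation sequence
  set k : ℕ → ℝ → ℝ≥0∞ := fun j => (Set.Ioc (T / (j + 1)) T).indicator g with hk
  have hkmeas : ∀ j, Measurable (k j) := fun j => hgmeas.indicator measurableSet_Ioc
  have hkmono : Monotone k := by
    intro i j hij
    apply Set.indicator_le_indicator_of_subset
    · apply Set.Ioc_subset_Ioc_left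
      apply div_le_div_of_nonneg_left hT.le
      · positivity
      · have := (Nat.cast_le (α := ℝ)).2 hij; linarith
    · exact fun t => zero_le
  have hksup : ∀ t ∈ Set.Ioc (0:ℝ) T, (⨆ j, k j t) = g t := by
    rintro t ⟨ht0, htT⟩
    refine le_antisymm (iSup_le fun j => Set.indicator_le_self _ _ t) ?_
    obtain ⟨n, hn⟩ := exists_nat_gt (T / t)
    have hlt : T / (n + 1) < t := by
      rw [div_lt_iff₀ (by positivity)]
      rw [div_lt_iff₀ ht0] at hn
      nlinarith
    have : g t = k n t := (Set.indicator_of_mem (Set.mem_Ioc.mpr ⟨hlt, htT⟩) g).symm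
    rw [this]
    exact le_iSup (fun j => k j t) n
  -- expected value of L n
  set e : ℕ → ℝ≥0∞ := fun n => ∫⁻ ω, ENNReal.ofReal (L n ω) ∂μ with he
  have he_formula : ∀ n, e n = ENNReal.ofReal T * (ENNReal.ofReal (1/2)) ^ n := by
    intro n
    induction n with
    | zero =>
      rw [he]
      simp only [pow_zero, mul_one]
      have : (fun ω => ENNReal.ofReal (L 0 ω)) = fun _ => ENNReal.ofReal T := by
        funext ω; rw [hL0]
      rw [this, lintegral_const, measure_univ, mul_one]
    | succ n ih =>
      have step1 : e (n + 1) = ∫⁻ ω, ENNReal.ofReal (L n ω * U (n + 1) ω) ∂μ := by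
        rw [he]
        exact lintegral_congr fun ω => by rw [hL]; ring_nf
      have step2 : ∫⁻ ω, ENNReal.ofReal (L n ω * U (n + 1) ω) ∂μ
          = ∫⁻ ω, (∫⁻ v in Set.Ioo (0:ℝ) 1, ENNReal.ofReal (L n ω * v)) ∂μ := by
        rw [← hUunif (n + 1)]
        exact lemA (hLmeas n) (hUmeas (n + 1))
          (indep_L_U T hUmeas hVmeas hindep hL0 hL n)
          (fun x y => ENNReal.ofReal (x * y))
          (ENNReal.measurable_ofReal.comp (measurable_fst.mul measurable_snd))
      have step3 : ∫⁻ ω, (∫⁻ v in Set.Ioo (0:ℝ) 1, ENNReal.ofReal (L n ω * v)) ∂μ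
          = ∫⁻ ω, ENNReal.ofReal (L n ω) * ENNReal.ofReal (1/2) ∂μ := by
        apply lintegral_congr_ae
        filter_upwards [hLbounds] with ω hω
        have h0 : 0 ≤ L n ω := (hω n).1.le
        have : ∀ v : ℝ, ENNReal.ofReal (L n ω * v)
            = ENNReal.ofReal (L n ω) * ENNReal.ofReal v := fun v =>
          ENNReal.ofReal_mul h0
        simp_rw [this]
        rw [lintegral_const_mul _ ENNReal.measurable_ofReal, J_half]
      rw [step1, step2, step3, lintegral_mul_const _ (hLmeas n).ennreal_ofReal]
      have hrfl : (∫⁻ ω, ENNReal.ofReal (L n ω) ∂μ) = e n := rfl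
      rw [hrfl, ih, pow_succ]
      ring
  have he_tendsto : Filter.Tendsto e Filter.atTop (nhds 0) := by
    have h1 : Filter.Tendsto (fun n => ENNReal.ofReal T * (ENNReal.ofReal (1/2)) ^ n)
        Filter.atTop (nhds 0) := by
      have hp := ENNReal.tendsto_pow_atTop_nhds_zero_of_lt_one
        (ENNReal.ofReal_lt_one.mpr (by norm_num : (1:ℝ)/2 < 1))
      have := ENNReal.Tendsto.const_mul (a := ENNReal.ofReal T) hp
        (Or.inr ENNReal.ofReal_ne_top)
      simpa using this
    have h2 : e = fun n => ENNReal.ofReal T * (ENNReal.ofReal (1/2)) ^ n :=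
      funext he_formula
    rw [h2]; exact h1
  -- per-truncation main identity
  have main : ∀ j : ℕ, (∑' n : ℕ, ∫⁻ ω, k j (lam (n + 1) ω) ∂μ) = sbF (k j) T := by
    intro j
    set ε : ℝ := T / (j + 1) with hε_def
    have hε : 0 < ε := by positivity
    have hκ0 : ∀ t ≤ ε, k j t = 0 := by
      intro t ht
      apply Set.indicator_of_notMem
      rw [Set.mem_Ioc]
      push_neg
      intro h'
      exact absurd ht (not_le.mpr h')
    have hκC : ∀ t, k j t ≤ ENNReal.ofReal C :=
      fun t => le_trans (Set.indicator_le_self _ _ t) (hgbdd t)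
    set a : ℕ → ℝ≥0∞ := fun n => ∫⁻ ω, k j (lam (n + 1) ω) ∂μ with ha
    set b : ℕ → ℝ≥0∞ := fun n => ∫⁻ ω, sbF (k j) (L n ω) ∂μ with hb
    have hinmeas1 : ∀ n : ℕ, Measurable fun ω =>
        ∫⁻ u in Set.Ioo (0:ℝ) 1, k j (L n ω * (1 - u)) := by
      intro n
      have h1 : Measurable (Function.uncurry fun x u : ℝ => k j (x * (1 - u))) :=
        (hkmeas j).comp (measurable_fst.mul (measurable_const.sub measurable_snd))
      exact (Measurable.lintegral_prod_right h1).comp (hLmeas n)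
    have step_a : ∀ n : ℕ, a n
        = ∫⁻ ω, (∫⁻ u in Set.Ioo (0:ℝ) 1, k j (L n ω * (1 - u))) ∂μ := by
      intro n
      rw [ha]
      simp only []
      have h1 : (∫⁻ ω, k j (lam (n + 1) ω) ∂μ)
          = ∫⁻ ω, k j (L n ω * (1 - U (n + 1) ω)) ∂μ :=
        lintegral_congr fun ω => by rw [hlam_eq]
      rw [h1, ← hUunif (n + 1)]
      exact lemA (hLmeas n) (hUmeas (n + 1))
        (indep_L_U T hUmeas hVmeas hindep hL0 hL n)
        (fun x u => k j (x * (1 - u)))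
        ((hkmeas j).comp (measurable_fst.mul (measurable_const.sub measurable_snd)))
    have step_b : ∀ n : ℕ, b (n + 1)
        = ∫⁻ ω, (∫⁻ u in Set.Ioo (0:ℝ) 1, sbF (k j) (L n ω * u)) ∂μ := by
      intro n
      rw [hb]
      simp only []
      have h1 : (∫⁻ ω, sbF (k j) (L (n + 1) ω) ∂μ)
          = ∫⁻ ω, sbF (k j) (L n ω * U (n + 1) ω) ∂μ :=
        lintegral_congr fun ω => by rw [hL]; ring_nf
      rw [h1, ← hUunif (n + 1)]
      exact lemA (hLmeas n) (hUmeas (n + 1))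
        (indep_L_U T hUmeas hVmeas hindep hL0 hL n)
        (fun x u => sbF (k j) (x * u))
        ((sbF_meas (k j)).comp (measurable_fst.mul measurable_snd))
    have claim1 : ∀ n : ℕ, a n + b (n + 1) = b n := by
      intro n
      rw [step_a n, step_b n, ← lintegral_add_left (hinmeas1 n)]
      apply lintegral_congr_ae
      filter_upwards [hLbounds] with ω hω
      exact key_ode (hkmeas j) (hω n).1
    have claim2 : b 0 = sbF (k j) T := by
      rw [hb]
      simp only []
      have h1 : (fun ω => sbF (k j) (L 0 ω)) = fun _ => sbF (k j) T := by
        funext ω; rw [hL0]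
      rw [h1, lintegral_const, measure_univ, mul_one]
    have claim3 : ∀ n : ℕ, b n ≤ (ENNReal.ofReal C / ENNReal.ofReal ε) * e n := by
      intro n
      rw [hb, he]
      simp only []
      calc (∫⁻ ω, sbF (k j) (L n ω) ∂μ)
          ≤ ∫⁻ ω, (ENNReal.ofReal C / ENNReal.ofReal ε) * ENNReal.ofReal (L n ω) ∂μ :=
            lintegral_mono fun ω => sbF_le hε hκC hκ0 (L n ω)
        _ = (ENNReal.ofReal C / ENNReal.ofReal ε) * ∫⁻ ω, ENNReal.ofReal (L n ω) ∂μ :=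
            lintegral_const_mul _ (hLmeas n).ennreal_ofReal
    have claim4 : Filter.Tendsto b Filter.atTop (nhds 0) := by
      have hD : (ENNReal.ofReal C / ENNReal.ofReal ε) ≠ ⊤ :=
        (ENNReal.div_lt_top ENNReal.ofReal_ne_top (ENNReal.ofReal_pos.mpr hε).ne').ne
      have hup : Filter.Tendsto (fun n => (ENNReal.ofReal C / ENNReal.ofReal ε) * e n)
          Filter.atTop (nhds 0) := by
        have := ENNReal.Tendsto.const_mul (a := ENNReal.ofReal C / ENNReal.ofReal ε)
          he_tendsto (Or.inr hD)
        simpa using this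
      exact tendsto_of_tendsto_of_tendsto_of_le_of_le tendsto_const_nhds hup
        (fun n => zero_le) claim3
    have claim5 : ∀ N : ℕ, (∑ i ∈ Finset.range N, a i) + b N = b 0 := by
      intro N
      induction N with
      | zero => simp
      | succ N ih =>
        rw [Finset.sum_range_succ, add_assoc, claim1 N, ih]
    have claim6 : (∑' n : ℕ, a n) = b 0 := by
      have h1 : Filter.Tendsto (fun N => (∑ i ∈ Finset.range N, a i) + b N)
          Filter.atTop (nhds ((∑' n : ℕ, a n) + 0)) :=
        (ENNReal.tendsto_nat_tsum a).add claim4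
      have h2 : (fun N => (∑ i ∈ Finset.range N, a i) + b N) = fun _ => b 0 :=
        funext claim5
      rw [h2] at h1
      have h3 := tendsto_nhds_unique h1 tendsto_const_nhds
      rw [add_zero] at h3
      exact h3
    exact claim6.trans claim2
  -- final assembly
  have hterm_meas : ∀ n : ℕ,
      AEMeasurable (fun ω => ENNReal.ofReal (φ (lam (n + 1) ω) (V (n + 1) ω))) μ := fun n =>
    (ENNReal.measurable_ofReal.comp
      (hφmeas.comp ((hlammeas n).prodMk (hVmeas (n + 1))))).aemeasurable
  rw [lintegral_tsum hterm_meas]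
  have step1 : ∀ n : ℕ,
      (∫⁻ ω, ENNReal.ofReal (φ (lam (n + 1) ω) (V (n + 1) ω)) ∂μ)
        = ∫⁻ ω, g (lam (n + 1) ω) ∂μ := by
    intro n
    have hind : IndepFun (lam (n + 1)) (V (n + 1)) μ := by
      have h := indep_lam_V T hUmeas hVmeas hindep hL0 hL n
      have h2 : (fun ω => L n ω - L (n + 1) ω) = lam (n + 1) :=
        funext fun ω => (hlam n ω).symm
      rwa [h2] at h
    have h3 := lemA (hlammeas n) (hVmeas (n + 1)) hind
      (fun x y => ENNReal.ofReal (φ x y)) (ENNReal.measurable_ofReal.comp hφmeas)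
    rw [h3, hVunif (n + 1)]
  have step2 : ∀ n : ℕ, (∫⁻ ω, g (lam (n + 1) ω) ∂μ)
      = ⨆ j : ℕ, ∫⁻ ω, k j (lam (n + 1) ω) ∂μ := by
    intro n
    have hms : ∀ j : ℕ, Measurable fun ω => k j (lam (n + 1) ω) :=
      fun j => (hkmeas j).comp (hlammeas n)
    rw [← lintegral_iSup hms (fun i j hij ω => hkmono hij _)]
    apply lintegral_congr_ae
    filter_upwards [hlamIoc] with ω hω
    exact (hksup _ (hω n)).symm
  have hswap : (∑' n : ℕ, ⨆ j : ℕ, ∫⁻ ω, k j (lam (n + 1) ω) ∂μ)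
      = ⨆ j : ℕ, ∑' n : ℕ, ∫⁻ ω, k j (lam (n + 1) ω) ∂μ :=
    tsum_iSup_swap (fun n i j' hij => lintegral_mono fun ω => hkmono hij _)
  calc (∑' n : ℕ, ∫⁻ ω, ENNReal.ofReal (φ (lam (n + 1) ω) (V (n + 1) ω)) ∂μ)
      = ∑' n : ℕ, ⨆ j : ℕ, ∫⁻ ω, k j (lam (n + 1) ω) ∂μ :=
        tsum_congr fun n => (step1 n).trans (step2 n)
    _ = ⨆ j : ℕ, ∑' n : ℕ, ∫⁻ ω, k j (lam (n + 1) ω) ∂μ := hswap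
    _ = ⨆ j : ℕ, sbF (k j) T := iSup_congr main
    _ = ∫⁻ t in Set.Ioc (0:ℝ) T, g t / ENNReal.ofReal t := by
        have hmeasj : ∀ j : ℕ, Measurable fun t => k j t / ENNReal.ofReal t :=
          fun j => (hkmeas j).div (ENNReal.measurable_ofReal.comp measurable_id)
        have hmono2 : Monotone (fun j (t : ℝ) => k j t / ENNReal.ofReal t) :=
          fun i j hij t => ENNReal.div_le_div (hkmono hij t) le_rfl
        have h1 : (⨆ j : ℕ, sbF (k j) T)
            = ∫⁻ t in Set.Ioc (0:ℝ) T, ⨆ j, k j t / ENNReal.ofReal t :=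
          (lintegral_iSup hmeasj hmono2).symm
        rw [h1]
        apply setLIntegral_congr_fun measurableSet_Ioc
        intro t ht
        dsimp only
        rw [← ENNReal.iSup_div, hksup t ht]
    _ = ∫⁻ t in Set.Ioc (0 : ℝ) T,
          ENNReal.ofReal (∫ u in Set.Ioo (0 : ℝ) 1, φ t u) / ENNReal.ofReal t := by
        apply setLIntegral_congr_fun measurableSet_Ioc
        intro t _
        dsimp only
        congr 1
        have hmeast : AEStronglyMeasurable (φ t) (volume.restrict (Set.Ioo (0:ℝ) 1)) :=
          (hφmeas.comp (measurable_prodMk_left)).aestronglyMeasurable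
        have hint : Integrable (φ t) (volume.restrict (Set.Ioo (0:ℝ) 1)) := by
          apply Integrable.mono' (integrable_const C) hmeast
          apply Filter.Eventually.of_forall
          intro u
          rw [Real.norm_eq_abs, abs_of_nonneg (hφnn t u)]
          exact hC t u
        have hnn : 0 ≤ᵐ[volume.restrict (Set.Ioo (0:ℝ) 1)] φ t :=
          Filter.Eventually.of_forall (hφnn t)
        exact (ofReal_integral_eq_lintegral_ofReal hint hnn).symm
end

section
/- Let ν be a Lévy measure supported in (-1,1) with ∫ x² ν(dx) < ∞, and set Im ψ(u) = ∫ (sin(u x) - u x) ν(dx). Then for |u| > 1, |Im ψ(u) + u γ̄(1/|u|)| ≤ (1/3) u² σ̄²(1/|u|) + ν̄(1/|u|), where γ̄(x) = ∫_{(-1,1)\(-x,x)} y ν(dy), σ̄²(x) = ∫_{(-x,x)} y² ν(dy), ν̄(x) = ν((-1,1)\(-x,x)). -/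
open MeasureTheory Real Set ENNReal

/-- `|sin y - y| ≤ y^2/3` for `|y| ≤ 1`. -/
lemma abs_sin_sub_le_sq_third {y : ℝ} (hy : |y| ≤ 1) : |Real.sin y - y| ≤ y^2 / 3 := by
  have h1 := Real.sin_bound hy
  have h2 : |Real.sin y - y| ≤ |Real.sin y - (y - y^3/6)| + |y^3/6| := by
    have hrw : Real.sin y - y = (Real.sin y - (y - y^3/6)) + (-(y^3/6)) := by ring
    rw [hrw]
    exact (abs_add_le _ _).trans (by rw [abs_neg])
  have h3 : |y^3/6| ≤ y^2/6 := by
    rw [abs_div, abs_of_pos (by norm_num : (0:ℝ) < 6), ← abs_pow] at *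
    have h4 : |y|^3 ≤ |y|^2 := pow_le_pow_of_le_one (abs_nonneg y) hy (by norm_num)
    rw [abs_pow]
    nlinarith [sq_abs y]
  have h4 : |y|^4 * (5/96) ≤ y^2 * (5/96) := by
    have : |y|^4 ≤ |y|^2 := pow_le_pow_of_le_one (abs_nonneg y) hy (by norm_num)
    nlinarith [sq_abs y]
  nlinarith [sq_abs y, pow_le_pow_of_le_one (abs_nonneg y) hy (by norm_num : 2 ≤ 5)]

/-- Bound on the imaginary part of the Lévy–Khintchine exponent of a Lévy measure
supported in `(-1,1)` with finite second moment: with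
`Im ψ(u) = ∫ (sin(ux) - ux) ν(dx)`, for `|u| > 1`,
`|Im ψ(u) + u·γ̄(1/|u|)| ≤ (1/3)·u²·σ̄²(1/|u|) + ν̄(1/|u|)`, where
`γ̄(x) = ∫_{(-1,1)∖(-x,x)} y ν(dy)`, `σ̄²(x) = ∫_{(-x,x)} y² ν(dy)` and
`ν̄(x) = ν((-1,1)∖(-x,x))`. -/
theorem stmt_12 (ν : Measure ℝ) (hν0 : ν {0} = 0)
    (hsupp : ν ((Set.Ioo (-1 : ℝ) 1)ᶜ) = 0)
    (hν2 : ∫⁻ x, ENNReal.ofReal (x^2) ∂ν < ∞)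
    (Imψ : ℝ → ℝ)
    (hImψ : ∀ u : ℝ, Imψ u = ∫ x, (Real.sin (u * x) - u * x) ∂ν)
    (u : ℝ) (hu : 1 < |u|) :
    |Imψ u + u * (∫ y in Set.Ioo (-1 : ℝ) 1 \ Set.Ioo (-(1/|u|)) (1/|u|), y ∂ν)| ≤
      (1/3) * u^2 * (∫ y in Set.Ioo (-(1/|u|)) (1/|u|), y^2 ∂ν) +
      (ν (Set.Ioo (-1 : ℝ) 1 \ Set.Ioo (-(1/|u|)) (1/|u|))).toReal := by
  have hu0 : (0:ℝ) < |u| := lt_trans one_pos hu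
  set ε : ℝ := 1/|u| with hεdef
  have hε0 : 0 < ε := by positivity
  have hε1 : ε < 1 := by rw [hεdef, div_lt_one hu0]; exact hu
  set S : Set ℝ := Set.Ioo (-ε) ε with hSdef
  set A : Set ℝ := Set.Ioo (-1:ℝ) 1 \ S with hAdef
  have hSmeas : MeasurableSet S := measurableSet_Ioo
  have hAmeas : MeasurableSet A := measurableSet_Ioo.diff hSmeas
  set f : ℝ → ℝ := fun x => Real.sin (u * x) - u * x with hfdef
  have hfc : Continuous f := by
    fun_prop
  -- elements of A satisfy ε ≤ |x| < 1
  have hA_eps : ∀ x ∈ A, ε ≤ |x| ∧ |x| < 1 := by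
    intro x hx
    obtain ⟨hx1, hx2⟩ := hx
    rw [Set.mem_Ioo, not_and_or, not_lt, not_lt] at hx2
    constructor
    · rcases hx2 with h | h
      · calc ε ≤ -x := by linarith
          _ ≤ |x| := neg_le_abs x
      · exact h.trans (le_abs_self x)
    · exact abs_lt.mpr ⟨hx1.1, hx1.2⟩
  -- ν A is finite (Markov via second moment)
  have hνA : ν A ≠ ∞ := by
    intro hcon
    have hm : AEMeasurable (fun x : ℝ => ENNReal.ofReal (x^2)) ν := by fun_prop
    have hmarkov := mul_meas_ge_le_lintegral₀ hm (ENNReal.ofReal (ε^2))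
    have hsub : A ⊆ {x | ENNReal.ofReal (ε^2) ≤ ENNReal.ofReal (x^2)} := by
      intro x hx
      have h := (hA_eps x hx).1
      have : ε^2 ≤ x^2 := by nlinarith [abs_nonneg x, sq_abs x]
      exact ENNReal.ofReal_le_ofReal this
    have h1 : ν A ≤ ν {x | ENNReal.ofReal (ε^2) ≤ ENNReal.ofReal (x^2)} :=
      measure_mono hsub
    rw [hcon] at h1
    have h2 : ν {x | ENNReal.ofReal (ε^2) ≤ ENNReal.ofReal (x^2)} = ∞ :=
      top_le_iff.mp h1
    rw [h2, ENNReal.mul_top (ENNReal.ofReal_pos.mpr (pow_pos hε0 2)).ne'] at hmarkov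
    exact (lt_irrefl _ (lt_of_le_of_lt hmarkov hν2)).elim
  -- x² is integrable
  have hint2 : Integrable (fun x : ℝ => x^2) ν := by
    refine ⟨(continuous_pow 2).aestronglyMeasurable, ?_⟩
    rw [hasFiniteIntegral_iff_ofReal (Filter.Eventually.of_forall fun x => sq_nonneg x)]
    exact hν2
  -- pointwise bound on S
  have hS_bound : ∀ x ∈ S, |f x| ≤ (1/3) * u^2 * x^2 := by
    intro x hx
    have hxε : |x| ≤ ε := le_of_lt (abs_lt.mpr ⟨hx.1, hx.2⟩)
    have hux : |u * x| ≤ 1 := by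
      rw [abs_mul]
      calc |u| * |x| ≤ |u| * ε := by nlinarith
        _ = 1 := by rw [hεdef]; field_simp
    have := abs_sin_sub_le_sq_third hux
    calc |f x| ≤ (u*x)^2 / 3 := this
      _ = (1/3) * u^2 * x^2 := by ring
  -- integrability on S
  have hfS : IntegrableOn f S ν := by
    refine Integrable.mono' ((hint2.const_mul ((1:ℝ)/3 * u^2)).integrableOn)
      hfc.aestronglyMeasurable.restrict ?_
    exact (ae_restrict_iff' hSmeas).mpr (Filter.Eventually.of_forall fun x hx => by
      simpa [Real.norm_eq_abs] using hS_bound x hx)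
  -- integrability on A
  have hfA : IntegrableOn f A ν := by
    refine Measure.integrableOn_of_bounded hνA hfc.aestronglyMeasurable
      (M := 1 + |u|) ?_
    refine (ae_restrict_iff' hAmeas).mpr (Filter.Eventually.of_forall fun x hx => ?_)
    have hx1 := (hA_eps x hx).2
    calc ‖f x‖ ≤ |Real.sin (u*x)| + |u * x| := by
          rw [Real.norm_eq_abs]; exact abs_sub _ _
      _ ≤ 1 + |u| := by
          have h1 : |Real.sin (u*x)| ≤ 1 := Real.abs_sin_le_one _
          have h2 : |u * x| ≤ |u| := by rw [abs_mul]; nlinarith [abs_nonneg u]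
          linarith
  -- integrability of x ↦ u*x and of sin(u*x) on A
  have hgA : IntegrableOn (fun x : ℝ => x) A ν := by
    refine Measure.integrableOn_of_bounded hνA aestronglyMeasurable_id (M := 1) ?_
    exact (ae_restrict_iff' hAmeas).mpr (Filter.Eventually.of_forall fun x hx =>
      le_of_lt (by simpa [Real.norm_eq_abs] using (hA_eps x hx).2))
  -- S ∪ A = Ioo (-1) 1
  have hS_sub : S ⊆ Set.Ioo (-1:ℝ) 1 :=
    Set.Ioo_subset_Ioo (by linarith) (le_of_lt hε1)
  have hSA : S ∪ A = Set.Ioo (-1:ℝ) 1 := Set.union_diff_cancel hS_sub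
  have hdisj : Disjoint S A := Set.disjoint_sdiff_right
  -- integrability on Ioo (-1) 1 and globally
  have hfIoo : IntegrableOn f (Set.Ioo (-1:ℝ) 1) ν := by
    rw [← hSA]; exact hfS.union hfA
  have hfcompl : IntegrableOn f (Set.Ioo (-1:ℝ) 1)ᶜ ν := by
    rw [IntegrableOn, Measure.restrict_eq_zero.mpr hsupp]
    exact integrable_zero_measure
  have hf : Integrable f ν := by
    rw [← integrableOn_univ, ← Set.union_compl_self (Set.Ioo (-1:ℝ) 1)]
    exact hfIoo.union hfcompl
  -- split the integral
  have hzero : ∫ x in (Set.Ioo (-1:ℝ) 1)ᶜ, f x ∂ν = 0 := by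
    rw [Measure.restrict_eq_zero.mpr hsupp, integral_zero_measure]
  have hsplit : ∫ x, f x ∂ν = (∫ x in S, f x ∂ν) + ∫ x in A, f x ∂ν := by
    rw [← setIntegral_union hdisj hAmeas hfS hfA, hSA,
      ← integral_add_compl measurableSet_Ioo hf, hzero, add_zero]
  -- the key rewriting
  have hkey : Imψ u + u * (∫ y in A, y ∂ν)
      = (∫ x in S, f x ∂ν) + ∫ x in A, Real.sin (u * x) ∂ν := by
    rw [hImψ u, ← hfdef, hsplit, add_assoc]
    congr 1
    rw [← integral_const_mul u, ← integral_add hfA (hgA.const_mul u)]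
    congr 1
    ext x
    simp [hfdef]
  rw [hkey]
  have hb1 : |∫ x in S, f x ∂ν| ≤ (1/3) * u^2 * ∫ y in S, y^2 ∂ν := by
    have h := norm_integral_le_of_norm_le (μ := ν.restrict S) (f := f)
      ((hint2.const_mul ((1:ℝ)/3 * u^2)).integrableOn)
      ((ae_restrict_iff' hSmeas).mpr (Filter.Eventually.of_forall fun x hx => by
        simpa [Real.norm_eq_abs] using hS_bound x hx))
    rw [Real.norm_eq_abs, integral_const_mul] at h
    exact h
  have hb2 : |∫ x in A, Real.sin (u * x) ∂ν| ≤ (ν A).toReal := by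
    have := norm_setIntegral_le_of_norm_le_const (lt_top_iff_ne_top.mpr hνA)
      (C := 1) (f := fun x => Real.sin (u * x))
      (fun x _ => by simpa [Real.norm_eq_abs] using Real.abs_sin_le_one (u * x))
    simpa [Measure.real] using this
  calc |(∫ x in S, f x ∂ν) + ∫ x in A, Real.sin (u * x) ∂ν|
      ≤ |∫ x in S, f x ∂ν| + |∫ x in A, Real.sin (u * x) ∂ν| := abs_add_le _ _
    _ ≤ (1/3) * u^2 * (∫ y in S, y^2 ∂ν) + (ν A).toReal := add_le_add hb1 hb2
end

section
/- Let ν be a measure on (0,1) with ν((0,1)) possibly infinite but ∫_{(0,1)} x ν(dx) possibly infinite, and suppose ν((x,1)) < ∞ for all x ∈ (0,1). If ν has infinite first moment near 0, i.e. ∫_{(0,1)} x ν(dx) = ∞, then (1/u) ∫_{(0,1)} (u x - sin(u x)) ν(dx) ≥ ∫_{(1/u,1)} ν([y,1)) dy for every u > 1, and hence the left-hand side tends to ∞ as u → ∞. -/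
open MeasureTheory Real Set ENNReal Filter

lemma aux_sf (ν : Measure ℝ) (hsupp : ν ((Set.Ioo (0 : ℝ) 1)ᶜ) = 0)
    (hfin : ∀ x ∈ Set.Ioo (0 : ℝ) 1, ν (Set.Ioo x 1) < ∞) : SigmaFinite ν := by
  apply Measure.sigmaFinite_of_countable (S := Set.range (fun n : ℕ => Set.Ioo (1/(n+2) : ℝ) 1 ∪ (Set.Ioo (0:ℝ) 1)ᶜ))
  · exact Set.countable_range _
  · rintro s ⟨n, rfl⟩
    refine (measure_union_le _ _).trans_lt ?_
    have h1 : (1/(n+2) : ℝ) ∈ Set.Ioo (0:ℝ) 1 := by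
      constructor
      · positivity
      · rw [div_lt_one (by positivity)]; linarith [(by positivity : (0:ℝ) ≤ (n:ℝ))]
    simpa [hsupp] using hfin _ h1
  · apply Set.eq_univ_of_forall
    intro x
    rcases em (x ∈ Set.Ioo (0:ℝ) 1) with hx | hx
    · obtain ⟨n, hn⟩ := exists_nat_one_div_lt (by linarith [hx.1] : (0:ℝ) < x)
      have h2 : (1:ℝ)/(n+2) < x :=
        lt_of_le_of_lt (one_div_le_one_div_of_le (by positivity) (by linarith)) hn
      exact ⟨_, ⟨n, rfl⟩, Or.inl ⟨h2, hx.2⟩⟩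
    · exact ⟨_, ⟨0, rfl⟩, Or.inr hx⟩

lemma aux_fubini (ν : Measure ℝ) [SigmaFinite ν] (hsupp : ν ((Set.Ioo (0 : ℝ) 1)ᶜ) = 0)
    (a : ℝ) :
    ∫⁻ y in Set.Ioo a 1, ν (Set.Ico y 1) =
      ∫⁻ x in Set.Ioo (0:ℝ) 1, ENNReal.ofReal (x - a) ∂ν := by
  set f : ℝ → ℝ → ℝ≥0∞ := fun y x =>
    Set.indicator {p : ℝ × ℝ | p.1 ≤ p.2 ∧ p.2 < 1} 1 (y, x) with hf
  have hSm : MeasurableSet {p : ℝ × ℝ | p.1 ≤ p.2 ∧ p.2 < 1} := by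
    apply MeasurableSet.inter
    · exact measurableSet_le measurable_fst measurable_snd
    · exact measurableSet_lt measurable_snd measurable_const
  have hmeas : AEMeasurable (Function.uncurry f)
      ((volume.restrict (Set.Ioo a 1)).prod ν) := by
    apply Measurable.aemeasurable
    have : Function.uncurry f = Set.indicator {p : ℝ × ℝ | p.1 ≤ p.2 ∧ p.2 < 1} 1 := by
      ext ⟨y, x⟩; rfl
    rw [this]
    exact measurable_const.indicator hSm
  have h1 : ∀ y : ℝ, ν (Set.Ico y 1) = ∫⁻ x, f y x ∂ν := by
    intro y
    rw [hf]
    simp only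
    have : (fun x => Set.indicator {p : ℝ × ℝ | p.1 ≤ p.2 ∧ p.2 < 1} (1 : ℝ × ℝ → ℝ≥0∞) (y, x))
        = Set.indicator (Set.Ico y 1) (1 : ℝ → ℝ≥0∞) := by
      ext x
      simp [Set.indicator_apply, Set.mem_Ico]
    rw [this, lintegral_indicator measurableSet_Ico]
    simp
  calc ∫⁻ y in Set.Ioo a 1, ν (Set.Ico y 1)
      = ∫⁻ y in Set.Ioo a 1, ∫⁻ x, f y x ∂ν := by
        exact lintegral_congr fun y => h1 y
    _ = ∫⁻ x, (∫⁻ y in Set.Ioo a 1, f y x) ∂ν := lintegral_lintegral_swap hmeas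
    _ = ∫⁻ x in Set.Ioo (0:ℝ) 1, (∫⁻ y in Set.Ioo a 1, f y x) ∂ν := by
        have hae : ∀ᵐ x ∂ν, x ∈ Set.Ioo (0:ℝ) 1 := by
          rw [ae_iff]; exact hsupp
        rw [Measure.restrict_eq_self_of_ae_mem hae]
    _ = ∫⁻ x in Set.Ioo (0:ℝ) 1, ENNReal.ofReal (x - a) ∂ν := by
        refine setLIntegral_congr_fun measurableSet_Ioo (fun x hx => ?_)
        have hx1 : x < 1 := hx.2
        have : (fun y => f y x) = Set.indicator (Set.Iic x) (1 : ℝ → ℝ≥0∞) := by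
          ext y
          simp [hf, Set.indicator_apply, Set.mem_Iic, hx1]
        rw [this, lintegral_indicator measurableSet_Iic]
        simp only [Pi.one_apply]
        rw [setLIntegral_one, Measure.restrict_apply measurableSet_Iic]
        have : Set.Iic x ∩ Set.Ioo a 1 = Set.Ioc a x := by
          ext y
          simp only [Set.mem_inter_iff, Set.mem_Iic, Set.mem_Ioo, Set.mem_Ioc]
          constructor
          · rintro ⟨h1, h2, h3⟩; exact ⟨h2, h1⟩
          · rintro ⟨h1, h2⟩; exact ⟨h2, h1, lt_of_le_of_lt h2 hx1⟩
        rw [this, Real.volume_Ioc]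

/-- Let `ν` be a measure supported on `(0,1)` with `ν((x,1)) < ∞` for all `x ∈ (0,1)`
but `∫_{(0,1)} x ν(dx) = ∞`. Then for every `u > 1`,
`(1/u)·∫_{(0,1)} (ux - sin(ux)) ν(dx) ≥ ∫_{(1/u,1)} ν([y,1)) dy`,
and the left-hand side tends to `∞` as `u → ∞` (in the extended reals). -/
theorem stmt_13 (ν : Measure ℝ) (hsupp : ν ((Set.Ioo (0 : ℝ) 1)ᶜ) = 0)
    (hfin : ∀ x ∈ Set.Ioo (0 : ℝ) 1, ν (Set.Ioo x 1) < ∞)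
    (hmom : ∫⁻ x in Set.Ioo (0 : ℝ) 1, ENNReal.ofReal x ∂ν = ∞) :
    (∀ u : ℝ, 1 < u →
      ∫⁻ y in Set.Ioo (1/u) 1, ν (Set.Ico y 1) ≤
        (ENNReal.ofReal u)⁻¹ *
          ∫⁻ x in Set.Ioo (0 : ℝ) 1, ENNReal.ofReal (u * x - Real.sin (u * x)) ∂ν) ∧
    Tendsto (fun u : ℝ => (ENNReal.ofReal u)⁻¹ *
        ∫⁻ x in Set.Ioo (0 : ℝ) 1, ENNReal.ofReal (u * x - Real.sin (u * x)) ∂ν)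
      atTop (nhds ⊤) := by
  haveI : SigmaFinite ν := aux_sf ν hsupp hfin
  -- pointwise inequality
  have hpt : ∀ u : ℝ, 1 < u → ∀ x : ℝ,
      ENNReal.ofReal (x - 1/u) ≤ (ENNReal.ofReal u)⁻¹ * ENNReal.ofReal (u * x - Real.sin (u * x)) := by
    intro u hu x
    have hu0 : (0:ℝ) < u := by linarith
    by_cases hx : x ≤ 1/u
    · rw [ENNReal.ofReal_of_nonpos (by linarith)]
      exact zero_le
    · push_neg at hx
      have hux : 1 < u * x := by
        have h' : 1 < x * u := (div_lt_iff₀ hu0).mp hx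
        rw [mul_comm]; exact h'
      have hsin : Real.sin (u * x) ≤ 1 := Real.sin_le_one _
      have key : u * (x - 1/u) ≤ u * x - Real.sin (u * x) := by
        field_simp
        linarith
      calc ENNReal.ofReal (x - 1/u)
          = (ENNReal.ofReal u)⁻¹ * ENNReal.ofReal (u * (x - 1/u)) := by
            rw [ENNReal.ofReal_mul hu0.le, ← mul_assoc,
              ENNReal.inv_mul_cancel (by simpa using hu0) ENNReal.ofReal_ne_top, one_mul]
        _ ≤ (ENNReal.ofReal u)⁻¹ * ENNReal.ofReal (u * x - Real.sin (u * x)) :=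
            mul_le_mul_right (ENNReal.ofReal_le_ofReal key) _
  have part1 : ∀ u : ℝ, 1 < u →
      ∫⁻ y in Set.Ioo (1/u) 1, ν (Set.Ico y 1) ≤
        (ENNReal.ofReal u)⁻¹ *
          ∫⁻ x in Set.Ioo (0 : ℝ) 1, ENNReal.ofReal (u * x - Real.sin (u * x)) ∂ν := by
    intro u hu
    rw [aux_fubini ν hsupp (1/u)]
    have hmble : Measurable (fun x : ℝ => ENNReal.ofReal (u * x - Real.sin (u * x))) := by
      apply Measurable.ennreal_ofReal
      fun_prop
    rw [← lintegral_const_mul _ hmble]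
    exact lintegral_mono fun x => hpt u hu x
  refine ⟨part1, ?_⟩
  -- part 2
  have hdiv : ∫⁻ y in Set.Ioo (0:ℝ) 1, ν (Set.Ico y 1) = ∞ := by
    rw [aux_fubini ν hsupp 0]
    simpa using hmom
  set h : ℝ → ℝ≥0∞ := fun y => ν (Set.Ico y 1) with hh
  have hmh : Measurable h := by
    have : Antitone h := fun y₁ y₂ hy => measure_mono (Set.Ico_subset_Ico hy le_rfl)
    exact this.measurable
  -- monotone convergence along 1/(n+2)
  have hsup : (⨆ n : ℕ, ∫⁻ y in Set.Ioo (1/(n+2) : ℝ) 1, h y) = ∞ := by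
    have hmono : Monotone (fun n : ℕ => Set.indicator (Set.Ioo (1/(n+2):ℝ) 1) h) := by
      intro m n hmn
      apply Set.indicator_le_indicator_of_subset
      · apply Set.Ioo_subset_Ioo _ le_rfl
        apply one_div_le_one_div_of_le (by positivity)
        push_cast; linarith [(Nat.cast_le (α := ℝ)).2 hmn]
      · intro y; exact zero_le
    have hlim : (fun y => ⨆ n : ℕ, Set.indicator (Set.Ioo (1/(n+2):ℝ) 1) h y)
        = Set.indicator (Set.Ioo (0:ℝ) 1) h := by
      ext y
      rcases em (y ∈ Set.Ioo (0:ℝ) 1) with hy | hy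
      · rw [Set.indicator_of_mem hy]
        apply le_antisymm
        · exact iSup_le fun n => by
            rcases em (y ∈ Set.Ioo (1/(n+2):ℝ) 1) with h' | h'
            · rw [Set.indicator_of_mem h']
            · rw [Set.indicator_of_notMem h']; exact zero_le
        · obtain ⟨n, hn⟩ := exists_nat_one_div_lt hy.1
          refine le_trans ?_ (le_iSup _ n)
          have hmem : y ∈ Set.Ioo (1/(n+2):ℝ) 1 :=
            ⟨lt_of_le_of_lt (one_div_le_one_div_of_le (by positivity) (by linarith)) hn, hy.2⟩
          rw [Set.indicator_of_mem hmem]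
      · rw [Set.indicator_of_notMem hy]
        apply le_antisymm _ zero_le
        apply iSup_le fun n => ?_
        rw [Set.indicator_of_notMem]
        intro h'
        apply hy
        exact ⟨lt_trans (by positivity) h'.1, h'.2⟩
    calc (⨆ n : ℕ, ∫⁻ y in Set.Ioo (1/(n+2) : ℝ) 1, h y)
        = ⨆ n : ℕ, ∫⁻ y, Set.indicator (Set.Ioo (1/(n+2):ℝ) 1) h y := by
          refine iSup_congr fun n => ?_
          rw [lintegral_indicator measurableSet_Ioo]
      _ = ∫⁻ y, ⨆ n : ℕ, Set.indicator (Set.Ioo (1/(n+2):ℝ) 1) h y := by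
          rw [lintegral_iSup (fun n => hmh.indicator measurableSet_Ioo) hmono]
      _ = ∫⁻ y, Set.indicator (Set.Ioo (0:ℝ) 1) h y := by rw [hlim]
      _ = ∞ := by rw [← lintegral_indicator measurableSet_Ioo] at hdiv; exact hdiv
  apply ENNReal.tendsto_nhds_top
  intro M
  obtain ⟨n, hn⟩ : ∃ n : ℕ, (M : ℝ≥0∞) < ∫⁻ y in Set.Ioo (1/(n+2) : ℝ) 1, h y := by
    by_contra hc
    push_neg at hc
    exact absurd (hsup ▸ iSup_le hc) (by simp)
  filter_upwards [Filter.eventually_ge_atTop ((n:ℝ)+2)] with u hu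
  have hu1 : (1:ℝ) < u := by linarith [(by positivity : (0:ℝ) ≤ (n:ℝ))]
  calc (M : ℝ≥0∞) < ∫⁻ y in Set.Ioo (1/(n+2) : ℝ) 1, h y := hn
    _ ≤ ∫⁻ y in Set.Ioo (1/u : ℝ) 1, h y := by
        apply lintegral_mono_set
        apply Set.Ioo_subset_Ioo _ le_rfl
        exact one_div_le_one_div_of_le (by linarith) hu
    _ ≤ _ := part1 u hu1
end

section
/- Define h : (e^e, ∞) → ℝ by h(x) = log(1 + sin(log x)² · x · (log x)²). Then h'(x) → 0 as x → ∞, and consequently the function ρ with ρ(1/x) = 1 + sin(log log x)² · log x · (log log x)² for x > e^e is slowly varying at 0. -/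
open Real Filter

noncomputable def Fa (x : ℝ) : ℝ := 1 + Real.sin (Real.log x)^2 * x * (Real.log x)^2

noncomputable def Fa' (x : ℝ) : ℝ :=
  2 * Real.sin (Real.log x) * Real.cos (Real.log x) * (Real.log x)^2
    + Real.sin (Real.log x)^2 * (Real.log x)^2
    + 2 * Real.sin (Real.log x)^2 * Real.log x

lemma Fa_pos {x : ℝ} (hx : 0 < x) : 0 < Fa x := by
  unfold Fa; positivity

lemma hasDerivAt_Fa {x : ℝ} (hx : 0 < x) : HasDerivAt Fa (Fa' x) x := by
  have hlog : HasDerivAt Real.log x⁻¹ x := Real.hasDerivAt_log hx.ne'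
  have hsin : HasDerivAt (fun y => Real.sin (Real.log y)) (Real.cos (Real.log x) * x⁻¹) x :=
    (Real.hasDerivAt_sin _).comp x hlog
  have h1 : HasDerivAt (fun y => Real.sin (Real.log y)^2)
      ((2:ℕ) * Real.sin (Real.log x)^1 * (Real.cos (Real.log x) * x⁻¹)) x := hsin.pow 2
  have h2 : HasDerivAt (fun y => (Real.log y)^2) ((2:ℕ) * (Real.log x)^1 * x⁻¹) x := hlog.pow 2
  have h3 := ((h1.mul (hasDerivAt_id x)).mul h2).const_add 1
  refine h3.congr_deriv ?_
  have hx0 : x ≠ 0 := hx.ne'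
  simp only [Fa', id, Pi.mul_apply]
  field_simp
  ring

lemma hasDerivAt_logFa {x : ℝ} (hx : 0 < x) :
    HasDerivAt (fun y => Real.log (Fa y)) (Fa' x / Fa x) x :=
  (hasDerivAt_Fa hx).log (Fa_pos hx).ne'

lemma Fa_bound {x : ℝ} (hx : 3 ≤ x) :
    |Fa' x / Fa x| ≤ Real.log x / Real.sqrt x + 1/x + 2/(x * Real.log x) := by
  have hx0 : (0:ℝ) < x := by linarith
  have hex : Real.exp 1 ≤ x := by
    have := Real.exp_one_lt_d9
    linarith
  have hL : 1 ≤ Real.log x := by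
    rw [show (1:ℝ) = Real.log (Real.exp 1) by simp]
    exact Real.log_le_log (Real.exp_pos 1) hex
  set L := Real.log x with hLdef
  set s := Real.sin L with hsdef
  set c := Real.cos L with hcdef
  have hL0 : 0 < L := by linarith
  have hsq : 0 < Real.sqrt x := Real.sqrt_pos.mpr hx0
  have hFpos : 0 < Fa x := Fa_pos hx0
  have hFa : Fa x = 1 + s^2 * x * L^2 := rfl
  -- AM-GM
  have hAM : 2 * |s| * Real.sqrt x * L ≤ Fa x := by
    have h := two_mul_le_add_sq 1 (|s| * Real.sqrt x * L)
    have hsx : (|s| * Real.sqrt x * L)^2 = s^2 * x * L^2 := by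
      rw [mul_pow, mul_pow, sq_abs, Real.sq_sqrt hx0.le]
    rw [hFa]; nlinarith [h, hsx]
  have hF2 : s^2 * x * L^2 ≤ Fa x := by rw [hFa]; linarith
  have habs : |Fa' x| ≤ 2 * |s| * L^2 + s^2 * L^2 + 2 * s^2 * L := by
    have h0 : Fa' x = 2*s*c*L^2 + s^2 * L^2 + 2 * s^2 * L := rfl
    rw [h0]
    have t1 : |2*s*c*L^2| ≤ 2 * |s| * L^2 := by
      rw [abs_mul, abs_mul, abs_mul]
      have hc1 : |c| ≤ 1 := abs_cos_le_one L
      have h2 : |(2:ℝ)| = 2 := by norm_num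
      have hL2 : |L^2| = L^2 := abs_of_nonneg (sq_nonneg L)
      rw [h2, hL2]
      have hcc : 2 * |s| * |c| ≤ 2 * |s| := by nlinarith [abs_nonneg s]
      nlinarith [mul_le_mul_of_nonneg_right hcc (sq_nonneg L)]
    have t2 : |s^2 * L^2| = s^2 * L^2 := abs_of_nonneg (by positivity)
    have t3 : |2 * s^2 * L| = 2 * s^2 * L := abs_of_nonneg (by positivity)
    calc |2*s*c*L^2 + s^2 * L^2 + 2 * s^2 * L| ≤ |2*s*c*L^2| + |s^2 * L^2| + |2 * s^2 * L| :=
          abs_add_three _ _ _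
      _ ≤ 2 * |s| * L^2 + s^2 * L^2 + 2 * s^2 * L := by rw [t2, t3]; linarith
  rw [abs_div, abs_of_pos hFpos, div_le_iff₀ hFpos, add_mul, add_mul]
  have u1 : 2 * |s| * L^2 ≤ (L / Real.sqrt x) * Fa x := by
    have := mul_le_mul_of_nonneg_left hAM (by positivity : 0 ≤ L / Real.sqrt x)
    have he : (L / Real.sqrt x) * (2 * |s| * Real.sqrt x * L) = 2 * |s| * L^2 := by
      field_simp
    linarith [he ▸ this]
  have u2 : s^2 * L^2 ≤ (1/x) * Fa x := by
    have := mul_le_mul_of_nonneg_left hF2 (by positivity : 0 ≤ 1/x)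
    have he : (1/x) * (s^2 * x * L^2) = s^2 * L^2 := by field_simp
    linarith [he ▸ this]
  have u3 : 2 * s^2 * L ≤ (2/(x*L)) * Fa x := by
    have := mul_le_mul_of_nonneg_left hF2 (by positivity : 0 ≤ 2/(x*L))
    have he : (2/(x*L)) * (s^2 * x * L^2) = 2 * s^2 * L := by field_simp
    linarith [he ▸ this]
  linarith

lemma boundTendsto :
    Tendsto (fun x : ℝ => Real.log x / Real.sqrt x + 1/x + 2/(x * Real.log x)) atTop (nhds 0) := by
  have h1 : Tendsto (fun x : ℝ => Real.log x / Real.sqrt x) atTop (nhds 0) := by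
    have := (isLittleO_log_rpow_atTop (by norm_num : (0:ℝ) < 1/2)).tendsto_div_nhds_zero
    apply this.congr
    intro x
    rw [Real.sqrt_eq_rpow]
  have h2 : Tendsto (fun x : ℝ => 1/x) atTop (nhds (0:ℝ)) := by
    simpa only [one_div] using tendsto_inv_atTop_zero
  have h3 : Tendsto (fun x : ℝ => 2/(x * Real.log x)) atTop (nhds (0:ℝ)) :=
    Tendsto.div_atTop tendsto_const_nhds (tendsto_id.atTop_mul_atTop₀ Real.tendsto_log_atTop)
  simpa using (h1.add h2).add h3

/-- For `h(x) = log(1 + sin(log x)²·x·(log x)²)` one has `h'(x) → 0` as `x → ∞`;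
consequently the function `ρ` with `ρ(1/x) = 1 + sin(log log x)²·log x·(log log x)²`
(for `x > e^e`) is slowly varying at `0`, i.e. `ρ(c·y)/ρ(y) → 1` as `y ↓ 0` for every
`c > 0`. -/
theorem stmt_16 :
    Tendsto (deriv fun x : ℝ =>
        Real.log (1 + Real.sin (Real.log x)^2 * x * (Real.log x)^2))
      atTop (nhds 0) ∧
    ∀ c : ℝ, 0 < c →
      Tendsto (fun y : ℝ =>
          (1 + Real.sin (Real.log (Real.log (1/(c*y))))^2 * Real.log (1/(c*y)) *
            (Real.log (Real.log (1/(c*y))))^2) /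
          (1 + Real.sin (Real.log (Real.log (1/y)))^2 * Real.log (1/y) *
            (Real.log (Real.log (1/y)))^2))
        (nhdsWithin 0 (Set.Ioi 0)) (nhds 1) := by
  have hderiv : ∀ᶠ x : ℝ in atTop, deriv (fun x : ℝ =>
      Real.log (1 + Real.sin (Real.log x)^2 * x * (Real.log x)^2)) x = Fa' x / Fa x := by
    filter_upwards [eventually_gt_atTop (0:ℝ)] with x hx
    exact (hasDerivAt_logFa hx).deriv
  constructor
  · apply squeeze_zero_norm' _ boundTendsto
    filter_upwards [hderiv, eventually_ge_atTop (3:ℝ)] with x heq hx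
    rw [heq, Real.norm_eq_abs]
    exact Fa_bound hx
  · intro c hc
    set a := Real.log c with ha
    -- step 1: difference of logs tends to 0
    have hG : Tendsto (fun u : ℝ => Real.log (Fa (u - a)) - Real.log (Fa u)) atTop (nhds 0) := by
      rw [NormedAddCommGroup.tendsto_nhds_zero]
      intro ε hε
      set ε' := ε / (2 * (|a| + 1)) with hε'
      have hε'pos : 0 < ε' := by positivity
      have hev : ∀ᶠ x : ℝ in atTop, |Fa' x / Fa x| < ε' := by
        filter_upwards [boundTendsto.eventually (gt_mem_nhds hε'pos), eventually_ge_atTop (3:ℝ)]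
          with x hb hx
        exact lt_of_le_of_lt (Fa_bound hx) hb
      obtain ⟨X₀, hX₀⟩ := eventually_atTop.mp hev
      set X := max X₀ 3 with hX
      have hX3 : (3:ℝ) ≤ X := le_max_right _ _
      filter_upwards [eventually_ge_atTop (X + |a|)] with u hu
      have hmem1 : u ∈ Set.Ici X := by
        simp only [Set.mem_Ici]; have := abs_nonneg a; linarith
      have hmem2 : u - a ∈ Set.Ici X := by
        simp only [Set.mem_Ici]; have := le_abs_self a; linarith
      have key : ‖Real.log (Fa (u - a)) - Real.log (Fa u)‖ ≤ ε' * ‖(u - a) - u‖ := by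
        refine Convex.norm_image_sub_le_of_norm_hasDerivWithin_le
          (f := fun t => Real.log (Fa t)) (f' := fun t => Fa' t / Fa t) (C := ε') (fun x hx => ?_) (fun x hx => ?_)
          (convex_Ici X) hmem1 hmem2
        · exact (hasDerivAt_logFa (by simp only [Set.mem_Ici] at hx; linarith)).hasDerivWithinAt
        · simp only [Set.mem_Ici] at hx
          rw [Real.norm_eq_abs]
          exact le_of_lt (hX₀ x (le_trans (le_max_left _ _) hx))
      have hnorm : ‖(u - a) - u‖ = |a| := by
        rw [show (u - a) - u = -a by ring, norm_neg, Real.norm_eq_abs]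
      rw [hnorm] at key
      calc ‖Real.log (Fa (u - a)) - Real.log (Fa u)‖ ≤ ε' * |a| := key
        _ ≤ ε' * (|a| + 1) := by nlinarith [abs_nonneg a]
        _ = ε / 2 := by rw [hε']; field_simp
        _ < ε := by linarith
    -- step 2: the ratio tends to 1 at atTop
    have hcomp : Tendsto (fun u : ℝ => Fa (u - a) / Fa u) atTop (nhds 1) := by
      have h := (Real.continuous_exp.tendsto 0).comp hG
      rw [Real.exp_zero] at h
      apply h.congr'
      filter_upwards [eventually_gt_atTop (|a|)] with u hu
      have h1 : 0 < u - a := by have := le_abs_self a; linarith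
      have h2 : 0 < u := lt_of_le_of_lt (abs_nonneg a) hu
      simp only [Function.comp_apply]
      rw [Real.exp_sub, Real.exp_log (Fa_pos h1), Real.exp_log (Fa_pos h2)]
    -- step 3: compose with log(1/y)
    have hlog1y : Tendsto (fun y : ℝ => Real.log (1/y)) (nhdsWithin 0 (Set.Ioi 0)) atTop := by
      have : Tendsto (fun y : ℝ => -Real.log y) (nhdsWithin 0 (Set.Ioi 0)) atTop :=
        tendsto_neg_atBot_atTop.comp Real.tendsto_log_nhdsGT_zero
      apply this.congr
      intro y; rw [one_div, Real.log_inv]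
    have := hcomp.comp hlog1y
    apply this.congr'
    filter_upwards [self_mem_nhdsWithin] with y hy
    have hy0 : 0 < y := hy
    have hkey : Real.log (1/(c*y)) = Real.log (1/y) - a := by
      rw [one_div, one_div, Real.log_inv, Real.log_inv, Real.log_mul hc.ne' hy0.ne', ha]
      ring
    simp only [Function.comp_apply]
    rw [hkey]
    rfl
end

section
/- For every k ∈ ℕ and u ∈ ℝ, sin(kπ + u)² ≤ u². Consequently, sin(log log u)² · (log log u)² ≤ 1 for all u in the interval [exp(e^{kπ - 1/(kπ)}), exp(e^{kπ})], and ∫_{e^e}^∞ du / ( u (1 + sin(log log u)² · log u · (log log u)²) ) = ∞, since this integral dominates Σ_{k=1}^∞ ∫_{exp(e^{kπ-1/(kπ)})}^{exp(e^{kπ})} du/(2 u log u) = Σ_{k=1}^∞ 1/(2kπ). -/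
open Real Filter MeasureTheory ENNReal

noncomputable def erodA (k : ℕ) : ℝ := Real.exp (Real.exp (k * π - 1/(k * π)))
noncomputable def erodB (k : ℕ) : ℝ := Real.exp (Real.exp (k * π))

lemma erod_parta (k : ℕ) (u : ℝ) : Real.sin (k * π + u)^2 ≤ u^2 := by
  have h : Real.sin (k*π + u) = Real.cos (k*π) * Real.sin u := by
    rw [Real.sin_add, Real.sin_nat_mul_pi]; ring
  have hs := Real.sin_sq_add_cos_sq ((k:ℝ)*π)
  rw [Real.sin_nat_mul_pi] at hs
  have hle : Real.sin u ^ 2 ≤ u ^ 2 := Real.sin_sq_le_sq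
  calc Real.sin (↑k*π+u)^2 = Real.cos (↑k*π)^2 * Real.sin u^2 := by rw [h]; ring
    _ = Real.sin u ^ 2 := by nlinarith
    _ ≤ u^2 := hle

lemma erod_c_bounds (k : ℕ) (hk : 1 ≤ k) : 3 < (k:ℝ) * π ∧ 1/((k:ℝ)*π) < 1 := by
  have h3 : (3:ℝ) < π := Real.pi_gt_three
  have hk1 : (1:ℝ) ≤ (k:ℝ) := by exact_mod_cast hk
  have h1 : (3:ℝ) < (k:ℝ)*π := by nlinarith
  constructor
  · exact h1
  · rw [div_lt_one (by linarith)]; linarith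

lemma erod_partb (k : ℕ) (hk : 1 ≤ k) (u : ℝ)
    (hu : u ∈ Set.Icc (erodA k) (erodB k)) :
    Real.sin (Real.log (Real.log u))^2 * (Real.log (Real.log u))^2 ≤ 1 := by
  simp only [erodA, erodB] at hu
  obtain ⟨hc3, hc1⟩ := erod_c_bounds k hk
  set c : ℝ := (k:ℝ) * π with hc
  have hcpos : 0 < c := by linarith
  have h1 : Real.exp (c - 1/c) ≤ Real.log u := by
    have := Real.log_le_log (Real.exp_pos _) hu.1
    rwa [Real.log_exp] at this
  have h2 : Real.log u ≤ Real.exp c := by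
    have := Real.log_le_log (lt_of_lt_of_le (Real.exp_pos _) hu.1) hu.2
    rwa [Real.log_exp] at this
  have hlogpos : 0 < Real.log u := lt_of_lt_of_le (Real.exp_pos _) h1
  have h3 : c - 1/c ≤ Real.log (Real.log u) := by
    have := Real.log_le_log (Real.exp_pos _) h1
    rwa [Real.log_exp] at this
  have h4 : Real.log (Real.log u) ≤ c := by
    have := Real.log_le_log hlogpos h2
    rwa [Real.log_exp] at this
  set L := Real.log (Real.log u)
  have hL0 : 0 ≤ L := by
    have : 0 < c - 1/c := by
      have : 1/c < 3 := lt_trans hc1 (by norm_num)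
      linarith
    linarith
  have hsin : Real.sin L ^ 2 ≤ (L - c)^2 := by
    have := erod_parta k (L - c)
    have heq : (k:ℝ)*π + (L - c) = L := by rw [← hc]; ring
    rwa [heq] at this
  have h5 : (L - c)^2 ≤ (1/c)^2 := by
    have hl : -(1/c) ≤ L - c := by linarith
    have hr : L - c ≤ 1/c := by
      have : 0 < 1/c := by positivity
      linarith
    nlinarith
  have h6 : L^2 ≤ c^2 := by nlinarith
  calc Real.sin L ^2 * L^2 ≤ (1/c)^2 * c^2 := by
        apply mul_le_mul (le_trans hsin h5) h6 (sq_nonneg L) (by positivity)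
    _ = 1 := by field_simp

lemma erod_AB_le (k : ℕ) (hk : 1 ≤ k) : erodA k ≤ erodB k := by
  obtain ⟨hc3, hc1⟩ := erod_c_bounds k hk
  apply Real.exp_le_exp.2
  apply Real.exp_le_exp.2
  have : 0 < 1/((k:ℝ)*π) := by positivity
  linarith

lemma erod_B_le_A {j l : ℕ} (hj : 1 ≤ j) (hjl : j + 1 ≤ l) : erodB j ≤ erodA l := by
  have hl : 1 ≤ l := le_trans (by omega) hjl
  obtain ⟨hc3, hc1⟩ := erod_c_bounds l hl
  apply Real.exp_le_exp.2
  apply Real.exp_le_exp.2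
  have hjl' : (j:ℝ) + 1 ≤ (l:ℝ) := by exact_mod_cast hjl
  have hπ : (3:ℝ) < π := Real.pi_gt_three
  have : (j:ℝ)*π + π ≤ (l:ℝ)*π := by nlinarith
  linarith

set_option maxHeartbeats 1000000 in
lemma erod_piece (k : ℕ) (hk : 1 ≤ k) :
    ENNReal.ofReal (1/(2*((k:ℝ)*π))) ≤
      ∫⁻ u in Set.Ioc (erodA k) (erodB k),
        ENNReal.ofReal (1 / (u * (1 + Real.sin (Real.log (Real.log u))^2 *
          Real.log u * (Real.log (Real.log u))^2))) := by
  obtain ⟨hc3, hc1⟩ := erod_c_bounds k hk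
  set c : ℝ := (k:ℝ) * π with hc
  have hcpos : 0 < c := by linarith
  set A := erodA k with hA
  set B := erodB k with hB
  have hAB : A ≤ B := erod_AB_le k hk
  have hA1 : 1 < A := by
    rw [hA, erodA]
    calc (1:ℝ) < Real.exp 1 := by
          have := Real.add_one_le_exp (1:ℝ); linarith
      _ ≤ Real.exp (Real.exp (↑k * π - 1 / (↑k * π))) := by
          apply Real.exp_le_exp.2
          have h2 : (1:ℝ) ≤ c - 1/c := by linarith
          calc (1:ℝ) ≤ c - 1/c := h2
            _ ≤ Real.exp (c - 1/c) := by have := Real.add_one_le_exp (c - 1/c); linarith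
  -- basic facts on the interval
  have hmem : ∀ x ∈ Set.Icc A B, 1 < x ∧ 1 ≤ Real.log x := by
    intro x hx
    have hx1 : 1 < x := lt_of_lt_of_le hA1 hx.1
    have hlog : Real.exp (c - 1/c) ≤ Real.log x := by
      have := Real.log_le_log (lt_trans one_pos hA1) hx.1
      rwa [hA, erodA, Real.log_exp, ← hc] at this
    have h2 : (1:ℝ) ≤ c - 1/c := by linarith
    have : (1:ℝ) ≤ Real.log x := by
      have := Real.add_one_le_exp (c - 1/c); linarith
    exact ⟨hx1, this⟩
  -- the comparison function
  set g : ℝ → ℝ := fun x => 1/(2*x*Real.log x) with hg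
  -- pointwise bound on Ioc
  have hpt : ∀ x ∈ Set.Ioc A B, ENNReal.ofReal (g x) ≤
      ENNReal.ofReal (1 / (x * (1 + Real.sin (Real.log (Real.log x))^2 *
          Real.log x * (Real.log (Real.log x))^2))) := by
    intro x hx
    have hx' : x ∈ Set.Icc A B := ⟨le_of_lt hx.1, hx.2⟩
    obtain ⟨hx1, hlog1⟩ := hmem x hx'
    have hb := erod_partb k hk x hx'
    apply ENNReal.ofReal_le_ofReal
    rw [hg]
    have hxpos : (0:ℝ) < x := by linarith
    have hsq : Real.sin (Real.log (Real.log x))^2 * Real.log x *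
        (Real.log (Real.log x))^2 ≤ Real.log x := by
      have h0 : Real.sin (Real.log (Real.log x))^2 * Real.log x *
          (Real.log (Real.log x))^2
          = (Real.sin (Real.log (Real.log x))^2 * (Real.log (Real.log x))^2)
            * Real.log x := by ring
      rw [h0]
      nlinarith
    have hden1 : 0 < x * (1 + Real.sin (Real.log (Real.log x))^2 *
        Real.log x * (Real.log (Real.log x))^2) := by
      have : 0 ≤ Real.sin (Real.log (Real.log x))^2 * Real.log x *
          (Real.log (Real.log x))^2 := by positivity
      nlinarith
    apply one_div_le_one_div_of_le hden1
    nlinarith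
  -- integral computation via FTC
  have hderiv : ∀ x ∈ Set.uIcc A B, HasDerivAt (fun y => Real.log (Real.log y) / 2) (g x) x := by
    intro x hx
    rw [Set.uIcc_of_le hAB] at hx
    obtain ⟨hx1, hlog1⟩ := hmem x hx
    have hxpos : (0:ℝ) < x := by linarith
    have hlogpos : (0:ℝ) < Real.log x := by linarith
    have h1 : HasDerivAt Real.log x⁻¹ x := Real.hasDerivAt_log (ne_of_gt hxpos)
    have h2 : HasDerivAt (fun y => Real.log (Real.log y)) ((Real.log x)⁻¹ * x⁻¹) x :=
      (Real.hasDerivAt_log (ne_of_gt hlogpos)).comp x h1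
    have h3 := h2.div_const 2
    refine h3.congr_deriv ?_
    rw [hg]
    field_simp
  have hcont : ContinuousOn g (Set.uIcc A B) := by
    intro x hx
    rw [Set.uIcc_of_le hAB] at hx
    obtain ⟨hx1, hlog1⟩ := hmem x hx
    have hxpos : (0:ℝ) < x := by linarith
    have hlogpos : (0:ℝ) < Real.log x := by linarith
    apply ContinuousAt.continuousWithinAt
    have hl : ContinuousAt Real.log x := Real.continuousAt_log (ne_of_gt hxpos)
    have hden : ContinuousAt (fun y => 2*y*Real.log y) x :=
      ((continuousAt_const.mul continuousAt_id).mul hl)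
    exact continuousAt_const.div hden (by positivity)
  have hII : IntervalIntegrable g volume A B := hcont.intervalIntegrable
  have hval : ∫ x in A..B, g x = 1/(2*c) := by
    rw [intervalIntegral.integral_eq_sub_of_hasDerivAt hderiv hII]
    rw [hB, hA, erodB, erodA, Real.log_exp, Real.log_exp, Real.log_exp, Real.log_exp, ← hc]
    field_simp
    ring
  have hIoc : IntegrableOn g (Set.Ioc A B) := hII.1
  have hnn : 0 ≤ᵐ[volume.restrict (Set.Ioc A B)] g := by
    apply ae_restrict_of_forall_mem measurableSet_Ioc
    intro x hx
    obtain ⟨hx1, hlog1⟩ := hmem x ⟨le_of_lt hx.1, hx.2⟩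
    rw [hg]
    have : (0:ℝ) < x := by linarith
    have : (0:ℝ) < Real.log x := by linarith
    positivity
  have hlin : ∫⁻ x in Set.Ioc A B, ENNReal.ofReal (g x) = ENNReal.ofReal (1/(2*c)) := by
    rw [← ofReal_integral_eq_lintegral_ofReal hIoc hnn]
    congr 1
    rw [← hval, intervalIntegral.integral_of_le hAB]
  calc ENNReal.ofReal (1/(2*((k:ℝ)*π))) = ∫⁻ x in Set.Ioc A B, ENNReal.ofReal (g x) := by
        rw [hlin, hc]
    _ ≤ _ := setLIntegral_mono' measurableSet_Ioc hpt

lemma erod_tsum_top : ∑' n : ℕ, ENNReal.ofReal (1/(2*(((n:ℝ)+1)*π))) = ∞ := by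
  by_contra h
  have h' : ∑' n : ℕ, ENNReal.ofReal (1/(2*(((n:ℝ)+1)*π))) ≠ ∞ := h
  have hsum := ENNReal.summable_toReal h'
  have hπ : (0:ℝ) < π := Real.pi_pos
  have heq : ∀ n : ℕ, (ENNReal.ofReal (1/(2*(((n:ℝ)+1)*π)))).toReal
      = (1/(2*π)) * (1/((n:ℝ)+1)) := by
    intro n
    rw [ENNReal.toReal_ofReal (by positivity)]
    field_simp
  rw [funext heq] at hsum
  have h2 : Summable (fun n : ℕ => 1/((n:ℝ)+1)) := by
    have hne : (1/(2*π)) ≠ 0 := by positivity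
    exact (summable_mul_left_iff hne).mp hsum
  have h3 : Summable (fun n : ℕ => 1/((n:ℝ))) := by
    rw [← summable_nat_add_iff 1]
    convert h2 using 2 with n
    · rfl
    push_cast
    ring
  exact Real.not_summable_one_div_natCast h3

/-- (a) For every `k ∈ ℕ` and `u ∈ ℝ`, `sin(kπ + u)² ≤ u²`.
(b) Consequently `sin(log log u)²·(log log u)² ≤ 1` for
`u ∈ [exp(e^{kπ - 1/(kπ)}), exp(e^{kπ})]` (`k ≥ 1`).
(c) Hence `∫_{e^e}^∞ du/(u(1 + sin(log log u)²·log u·(log log u)²)) = ∞`. -/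
theorem stmt_17 :
    (∀ (k : ℕ) (u : ℝ), Real.sin (k * π + u)^2 ≤ u^2) ∧
    (∀ k : ℕ, 1 ≤ k → ∀ u ∈ Set.Icc (Real.exp (Real.exp (k * π - 1/(k * π))))
        (Real.exp (Real.exp (k * π))),
      Real.sin (Real.log (Real.log u))^2 * (Real.log (Real.log u))^2 ≤ 1) ∧
    (∫⁻ u in Set.Ioi (Real.exp (Real.exp 1)),
        ENNReal.ofReal (1 / (u * (1 + Real.sin (Real.log (Real.log u))^2 *
          Real.log u * (Real.log (Real.log u))^2))) = ∞) := by
  refine ⟨erod_parta, fun k hk u hu => erod_partb k hk u hu, ?_⟩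
  set f : ℝ → ℝ≥0∞ := fun u => ENNReal.ofReal (1 / (u * (1 + Real.sin (Real.log (Real.log u))^2 *
          Real.log u * (Real.log (Real.log u))^2))) with hf
  set s : ℕ → Set ℝ := fun n => Set.Ioc (erodA (n+1)) (erodB (n+1)) with hs
  have hsub : (⋃ n, s n) ⊆ Set.Ioi (Real.exp (Real.exp 1)) := by
    intro x hx
    obtain ⟨n, hn⟩ := Set.mem_iUnion.mp hx
    have h1 : Real.exp (Real.exp 1) < erodA (n+1) := by
      rw [erodA]
      apply Real.exp_lt_exp.2
      apply Real.exp_lt_exp.2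
      obtain ⟨hc3, hc1⟩ := erod_c_bounds (n+1) (by omega)
      linarith
    exact lt_trans h1 hn.1
  have hdisj : Pairwise (Function.onFun Disjoint s) := by
    intro m n hmn
    rcases lt_or_gt_of_ne hmn with hlt | hlt
    · have hba : erodB (m+1) ≤ erodA (n+1) := erod_B_le_A (by omega) (by omega)
      apply Set.Ioc_disjoint_Ioc.mpr
      calc min (erodB (m+1)) (erodB (n+1)) ≤ erodB (m+1) := min_le_left _ _
        _ ≤ erodA (n+1) := hba
        _ ≤ max (erodA (m+1)) (erodA (n+1)) := le_max_right _ _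
    · have hba : erodB (n+1) ≤ erodA (m+1) := erod_B_le_A (by omega) (by omega)
      apply Set.Ioc_disjoint_Ioc.mpr
      calc min (erodB (m+1)) (erodB (n+1)) ≤ erodB (n+1) := min_le_right _ _
        _ ≤ erodA (m+1) := hba
        _ ≤ max (erodA (m+1)) (erodA (n+1)) := le_max_left _ _
  have hmeas : ∀ n, MeasurableSet (s n) := fun n => measurableSet_Ioc
  have key : (⊤ : ℝ≥0∞) ≤ ∫⁻ u in Set.Ioi (Real.exp (Real.exp 1)), f u := by
    calc (⊤ : ℝ≥0∞) = ∑' n : ℕ, ENNReal.ofReal (1/(2*(((n:ℝ)+1)*π))) := erod_tsum_top.symm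
      _ ≤ ∑' n : ℕ, ∫⁻ u in s n, f u := by
          apply ENNReal.tsum_le_tsum
          intro n
          have hp := erod_piece (n+1) (by omega)
          have hcast : (((n+1:ℕ)):ℝ) = (n:ℝ)+1 := by push_cast; ring
          rw [hcast] at hp
          exact hp
      _ = ∫⁻ u in ⋃ n, s n, f u := (lintegral_iUnion hmeas hdisj f).symm
      _ ≤ ∫⁻ u in Set.Ioi (Real.exp (Real.exp 1)), f u := lintegral_mono_set hsub
  exact top_le_iff.mp key
end

section
/- Fix α ∈ (1,2), an integer η > 2/(2-α), and set a_n = 2^{-η^n}. Then Σ_{n=1}^∞ a_n^{1-α} = ∞, and for c = c_+ + c_- > 0 the quantity c · Σ_{k=1}^∞ a_k^{-α} (1 - cos(2π a_k / a_n)) is bounded above by 4 c π² Σ_{k=1}^∞ 2^{-η^n((2-α)η^k - 2)}, which tends to 0 as n → ∞. -/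
open Real Filter ENNReal

lemma one_sub_cos_le_half_sq' (x : ℝ) : 1 - Real.cos x ≤ x ^ 2 / 2 := by
  have h1 := Real.sin_sq_le_sq (x := x / 2)
  have h2 := Real.sin_sq_add_cos_sq (x / 2)
  have h3 := Real.cos_sq (x / 2)
  have h4 : 2 * (x / 2) = x := by ring
  rw [h4] at h3
  nlinarith

lemma sumaux (η : ℕ) (hη : 2 ≤ η) (C b : ℝ) (hb : 0 < b) :
    Summable (fun k : ℕ => (2 : ℝ) ^ (C - b * (η : ℝ) ^ (k + 1))) := by
  have hr0 : (0:ℝ) ≤ (2:ℝ) ^ (-b) := Real.rpow_nonneg (by norm_num) _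
  have hr1 : (2:ℝ) ^ (-b) < 1 := by
    exact Real.rpow_lt_one_of_one_lt_of_neg (by norm_num) (by linarith)
  have hgeo : Summable (fun k : ℕ => (2:ℝ) ^ C * ((2:ℝ) ^ (-b)) ^ (k + 1)) := by
    have := (summable_geometric_of_lt_one hr0 hr1).mul_left ((2:ℝ) ^ C * (2:ℝ)^(-b))
    simpa [pow_succ, mul_assoc, mul_comm, mul_left_comm] using this
  refine Summable.of_nonneg_of_le (fun k => Real.rpow_nonneg (by norm_num) _) (fun k => ?_) hgeo
  have hpow : (k + 1 : ℝ) ≤ (η : ℝ) ^ (k + 1) := by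
    have : k + 1 < η ^ (k + 1) := Nat.lt_pow_self (by omega : 1 < η)
    exact_mod_cast this.le
  calc (2:ℝ) ^ (C - b * (η : ℝ) ^ (k + 1))
      ≤ (2:ℝ) ^ (C - b * (k + 1 : ℝ)) := by
        apply Real.rpow_le_rpow_of_exponent_le (by norm_num)
        nlinarith
    _ = (2:ℝ) ^ C * ((2:ℝ) ^ (-b)) ^ (k + 1) := by
        rw [← Real.rpow_natCast ((2:ℝ) ^ (-b)), ← Real.rpow_mul (by norm_num),
          ← Real.rpow_add (by norm_num)]
        push_cast
        ring_nf

/-- Orey's example: fix `α ∈ (1,2)`, an integer `η > 2/(2-α)` and `a_n = 2^{-η^n}`.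
Then `Σ_{n≥1} a_n^{1-α} = ∞`, and for `c > 0` and every `n ≥ 1`,
`c·Σ_{k≥1} a_k^{-α}(1 - cos(2π a_k/a_n)) ≤ 4cπ²·Σ_{k≥1} 2^{-η^n((2-α)η^k - 2)}`,
the right-hand side tending to `0` as `n → ∞`. -/
theorem stmt_18 (α : ℝ) (hα : α ∈ Set.Ioo (1 : ℝ) 2) (η : ℕ)
    (hη : 2 / (2 - α) < (η : ℝ))
    (a : ℕ → ℝ) (ha : ∀ n : ℕ, a n = (2 : ℝ) ^ (-((η : ℝ)) ^ n))
    (c : ℝ) (hc : 0 < c) :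
    (∑' n : ℕ, ENNReal.ofReal ((a (n+1)) ^ (1 - α)) = ∞) ∧
    (∀ n : ℕ, 1 ≤ n →
      c * ∑' k : ℕ, (a (k+1)) ^ (-α) * (1 - Real.cos (2 * π * (a (k+1)) / (a n)))
        ≤ 4 * c * π^2 *
          ∑' k : ℕ, (2 : ℝ) ^ (-((η : ℝ)) ^ n * ((2 - α) * ((η : ℝ)) ^ (k+1) - 2))) ∧
    Tendsto (fun n : ℕ => 4 * c * π^2 *
        ∑' k : ℕ, (2 : ℝ) ^ (-((η : ℝ)) ^ n * ((2 - α) * ((η : ℝ)) ^ (k+1) - 2)))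
      atTop (nhds 0) := by
  obtain ⟨hα1, hα2⟩ := hα
  have h2α : 0 < 2 - α := by linarith
  have hδ : 0 < (2 - α) * (η : ℝ) - 2 := by
    rw [div_lt_iff₀ h2α] at hη; linarith [mul_comm (2 - α) (η:ℝ)]
  have hη2R : (2 : ℝ) < (η : ℝ) := by
    have : (2:ℝ) < 2 / (2 - α) := by
      rw [lt_div_iff₀ h2α]; nlinarith
    linarith
  have hη2 : 2 ≤ η := by exact_mod_cast hη2R.le
  have hapos : ∀ m : ℕ, 0 < a m := fun m => (ha m) ▸ Real.rpow_pos_of_pos (by norm_num) _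
  -- the terms of the RHS series, as a function of n
  set t : ℕ → ℕ → ℝ := fun n k =>
    (2 : ℝ) ^ (-((η : ℝ)) ^ n * ((2 - α) * ((η : ℝ)) ^ (k+1) - 2)) with ht
  have htrw : ∀ n k, t n k = (2:ℝ) ^ (2 * (η:ℝ)^n - (2 - α) * (η:ℝ)^(k + n + 1)) := by
    intro n k
    have he : -((η:ℝ)) ^ n * ((2 - α) * ((η:ℝ)) ^ (k+1) - 2)
        = 2 * (η:ℝ)^n - (2 - α) * (η:ℝ)^(k + n + 1) := by
      rw [show k + n + 1 = n + (k+1) by ring, pow_add]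
      ring
    simp only [ht]
    rw [he]
  have hsumt : ∀ n : ℕ, Summable (t n) := by
    intro n
    have := sumaux η hη2 (2 * (η:ℝ)^n) ((2 - α) * (η:ℝ)^n) (by positivity)
    apply Summable.congr this
    intro k
    rw [htrw n k, show (2:ℝ) * (η:ℝ)^n - (2 - α) * (η:ℝ)^(k + n + 1)
        = 2 * (η:ℝ)^n - (2 - α) * (η:ℝ)^n * (η:ℝ)^(k+1) by
      rw [show k + n + 1 = n + (k+1) by ring, pow_add]; ring]
  have htnonneg : ∀ n k, 0 ≤ t n k := fun n k => Real.rpow_nonneg (by norm_num) _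
  refine ⟨?_, ?_, ?_⟩
  · -- divergence
    refine eq_top_iff.mpr ?_
    calc (⊤ : ℝ≥0∞) = ∑' _ : ℕ, (1 : ℝ≥0∞) :=
          (ENNReal.tsum_const_eq_top_of_ne_zero one_ne_zero).symm
      _ ≤ _ := by
          refine ENNReal.tsum_le_tsum fun n => ?_
          rw [← ENNReal.ofReal_one]
          apply ENNReal.ofReal_le_ofReal
          rw [ha, ← Real.rpow_mul (by norm_num)]
          calc (1:ℝ) = (2:ℝ) ^ (0:ℝ) := by norm_num
            _ ≤ _ := by
                apply Real.rpow_le_rpow_of_exponent_le (by norm_num)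
                nlinarith [pow_pos (by linarith : (0:ℝ) < (η:ℝ)) (n+1)]
  · -- the inequality
    intro n hn
    set f : ℕ → ℝ := fun k =>
      (a (k+1)) ^ (-α) * (1 - Real.cos (2 * π * (a (k+1)) / (a n))) with hf
    have hfnonneg : ∀ k, 0 ≤ f k := by
      intro k
      apply mul_nonneg (Real.rpow_nonneg (hapos _).le _)
      linarith [Real.cos_le_one (2 * π * (a (k+1)) / (a n))]
    -- the quadratic bound for every index m
    have key : ∀ m : ℕ, (a m) ^ (-α) * (1 - Real.cos (2 * π * (a m) / (a n)))
        ≤ 2 * π^2 * (2:ℝ) ^ (2 * (η:ℝ)^n - (2 - α) * (η:ℝ)^m) := by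
      intro m
      have hb := one_sub_cos_le_half_sq' (2 * π * (a m) / (a n))
      have h1 : (a m) ^ (-α) * (1 - Real.cos (2 * π * (a m) / (a n)))
          ≤ (a m) ^ (-α) * ((2 * π * (a m) / (a n))^2 / 2) :=
        mul_le_mul_of_nonneg_left hb (Real.rpow_nonneg (hapos _).le _)
      refine h1.trans_eq ?_
      have hd : a m / a n = (2:ℝ) ^ (-(η:ℝ)^m - -(η:ℝ)^n) := by
        rw [ha, ha, Real.rpow_sub (by norm_num : (0:ℝ) < 2)]
      have ham : a m ^ (-α) = (2:ℝ) ^ ((η:ℝ)^m * α) := by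
        rw [ha, ← Real.rpow_mul (by norm_num : (0:ℝ) ≤ 2),
          show -(η:ℝ)^m * -α = (η:ℝ)^m * α by ring]
      have hsq : ((2:ℝ) ^ (-(η:ℝ)^m - -(η:ℝ)^n))^2
          = (2:ℝ) ^ ((-(η:ℝ)^m - -(η:ℝ)^n) * 2) := by
        rw [← Real.rpow_natCast ((2:ℝ) ^ (-(η:ℝ)^m - -(η:ℝ)^n)) 2,
          ← Real.rpow_mul (by norm_num : (0:ℝ) ≤ 2)]
        norm_num
      calc a m ^ (-α) * ((2 * π * (a m) / (a n))^2 / 2)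
          = (2:ℝ) ^ ((η:ℝ)^m * α) * ((2 * π * (a m / a n))^2 / 2) := by
            rw [ham, mul_div_assoc]
        _ = (2:ℝ) ^ ((η:ℝ)^m * α) * (2 * π^2 * ((2:ℝ) ^ (-(η:ℝ)^m - -(η:ℝ)^n))^2) := by
            rw [hd]; ring
        _ = 2 * π^2 * ((2:ℝ) ^ ((η:ℝ)^m * α) * (2:ℝ) ^ ((-(η:ℝ)^m - -(η:ℝ)^n) * 2)) := by
            rw [hsq]; ring
        _ = 2 * π^2 * (2:ℝ) ^ ((η:ℝ)^m * α + (-(η:ℝ)^m - -(η:ℝ)^n) * 2) := by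
            rw [← Real.rpow_add (by norm_num : (0:ℝ) < 2)]
        _ = 2 * π^2 * (2:ℝ) ^ (2 * (η:ℝ)^n - (2 - α) * (η:ℝ)^m) := by
            rw [show (η:ℝ)^m * α + (-(η:ℝ)^m - -(η:ℝ)^n) * 2
              = 2 * (η:ℝ)^n - (2 - α) * (η:ℝ)^m by ring]
    -- vanishing of the first n terms
    have hzero : ∀ k, k < n → f k = 0 := by
      intro k hk
      have hle : η ^ (k+1) ≤ η ^ n := Nat.pow_le_pow_right (by omega) (by omega)
      have hq : a (k+1) / a n = ((2 ^ (η ^ n - η ^ (k+1)) : ℕ) : ℝ) := by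
        rw [ha, ha, ← Real.rpow_sub (by norm_num)]
        have he : -(η:ℝ)^(k+1) - (-(η:ℝ)^n) = ((η ^ n - η ^ (k+1) : ℕ) : ℝ) := by
          have := Nat.cast_sub (R := ℝ) hle
          rw [this]
          push_cast
          ring
        rw [he, Real.rpow_natCast]
        push_cast
        ring
      have hcos : Real.cos (2 * π * (a (k+1)) / (a n)) = 1 := by
        rw [mul_div_assoc, hq, show 2 * π * ((2 ^ (η ^ n - η ^ (k+1)) : ℕ) : ℝ)
            = ((2 ^ (η ^ n - η ^ (k+1)) : ℕ) : ℝ) * (2 * π) by ring]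
        exact Real.cos_nat_mul_two_pi _
      simp [hf, hcos]
    -- summability of f
    have hsumF : Summable (fun k : ℕ => 2 * π^2 * (2:ℝ) ^ (2 * (η:ℝ)^n - (2 - α) * (η:ℝ)^(k+1))) :=
      (sumaux η hη2 (2 * (η:ℝ)^n) (2 - α) h2α).mul_left _
    have hsumf : Summable f :=
      Summable.of_nonneg_of_le hfnonneg (fun k => key (k+1)) hsumF
    -- reduce to the tail
    have hsplit : ∑' k, f k = ∑' j, f (j + n) := by
      rw [← Summable.sum_add_tsum_nat_add n hsumf]
      rw [Finset.sum_eq_zero (fun i hi => hzero i (Finset.mem_range.mp hi)), zero_add]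
    have htail : ∀ j : ℕ, f (j + n) ≤ 2 * π^2 * t n j := by
      intro j
      have := key (j + n + 1)
      rw [htrw]
      exact this
    have h2 : ∑' k, f k ≤ 2 * π^2 * ∑' j, t n j := by
      rw [hsplit, ← tsum_mul_left]
      exact Summable.tsum_le_tsum htail ((summable_nat_add_iff n).mpr hsumf) ((hsumt n).mul_left _)
    have h3 : (2:ℝ) * π^2 * ∑' j, t n j ≤ 4 * π^2 * ∑' j, t n j := by
      have : (0:ℝ) ≤ ∑' j, t n j := tsum_nonneg (htnonneg n)
      nlinarith [sq_nonneg π]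
    calc c * ∑' k, f k ≤ c * (4 * π^2 * ∑' j, t n j) := by
          apply mul_le_mul_of_nonneg_left (h2.trans h3) hc.le
      _ = 4 * c * π^2 * ∑' j, t n j := by ring
  · -- the limit
    have hρ0 : (0:ℝ) ≤ (2:ℝ) ^ (-((2 - α) * (η:ℝ) - 2)) := Real.rpow_nonneg (by norm_num) _
    have hρ1 : (2:ℝ) ^ (-((2 - α) * (η:ℝ) - 2)) < 1 :=
      Real.rpow_lt_one_of_one_lt_of_neg (by norm_num) (by linarith)
    set ρ : ℝ := (2:ℝ) ^ (-((2 - α) * (η:ℝ) - 2)) with hρ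
    set r : ℕ → ℝ := fun n => ρ ^ (η ^ n) with hr
    have hrlim : Tendsto r atTop (nhds 0) := by
      apply (tendsto_pow_atTop_nhds_zero_of_lt_one hρ0 hρ1).comp
      exact tendsto_pow_atTop_atTop_of_one_lt (by omega : 1 < η)
    have hrlt1 : ∀ n, r n < 1 := fun n => pow_lt_one₀ hρ0 hρ1 (by positivity)
    have hr0 : ∀ n, 0 ≤ r n := fun n => pow_nonneg hρ0 _
    -- bound on the sum
    have hbound : ∀ n : ℕ, ∑' k, t n k ≤ r n * (1 - r n)⁻¹ := by
      intro n
      have hgeo : Summable (fun k : ℕ => r n * (r n) ^ k) :=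
        (summable_geometric_of_lt_one (hr0 n) (hrlt1 n)).mul_left _
      have hterm : ∀ k, t n k ≤ r n * (r n) ^ k := by
        intro k
        have e1 : r n * (r n) ^ k
            = (2:ℝ) ^ (-((2 - α) * (η:ℝ) - 2) * ((η:ℝ)^n * ((k:ℝ)+1))) := by
          rw [hr, ← pow_succ', ← pow_mul, hρ,
            ← Real.rpow_natCast ((2:ℝ) ^ (-((2 - α) * (η:ℝ) - 2))) (η ^ n * (k + 1)),
            ← Real.rpow_mul (by norm_num : (0:ℝ) ≤ 2),
            show ((η ^ n * (k + 1) : ℕ) : ℝ) = (η:ℝ)^n * ((k:ℝ)+1) by push_cast; ring]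
        rw [e1]
        simp only [ht]
        apply Real.rpow_le_rpow_of_exponent_le (by norm_num)
        have hη1k : (1:ℝ) ≤ (η:ℝ)^k := one_le_pow₀ (by linarith)
        have hk1 : (k + 1 : ℝ) ≤ (η:ℝ)^k := by
          have : k < η ^ k := Nat.lt_pow_self (by omega : 1 < η)
          exact_mod_cast this
        have hηn : (0:ℝ) < (η:ℝ)^n := by positivity
        have hkey : ((2 - α) * (η:ℝ) - 2) * (k+1) ≤ (2 - α) * (η:ℝ)^(k+1) - 2 := by
          have h1 : ((2 - α) * (η:ℝ) - 2) * (k+1) ≤ ((2 - α) * (η:ℝ) - 2) * (η:ℝ)^k :=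
            mul_le_mul_of_nonneg_left hk1 hδ.le
          have h2 : ((2 - α) * (η:ℝ) - 2) * (η:ℝ)^k ≤ (2 - α) * (η:ℝ)^(k+1) - 2 := by
            rw [pow_succ]
            nlinarith
          linarith
        nlinarith
      calc ∑' k, t n k ≤ ∑' k, r n * (r n)^k := Summable.tsum_le_tsum hterm (hsumt n) hgeo
        _ = r n * (1 - r n)⁻¹ := by
            rw [tsum_mul_left, tsum_geometric_of_lt_one (hr0 n) (hrlt1 n)]
    have hglim : Tendsto (fun n => r n * (1 - r n)⁻¹) atTop (nhds 0) := by
      have : Tendsto (fun n => (1 - r n)⁻¹) atTop (nhds (1 - 0)⁻¹) :=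
        ((tendsto_const_nhds.sub hrlim).inv₀ (by norm_num))
      simpa using hrlim.mul this
    have hSlim : Tendsto (fun n => ∑' k, t n k) atTop (nhds 0) :=
      squeeze_zero (fun n => tsum_nonneg (htnonneg n)) hbound hglim
    have := hSlim.const_mul (4 * c * π^2)
    simpa [ht] using this
end
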